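/- arXiv:2011.10877 — 4 statements merged into one kernel-verified Lean document; each statement's English description precedes it below -/
import Mathlib

section
/- Let Θ ∈ (0, π/2) and n ∈ ℕ. Let r be feasible for Problem Z5(n,Θ) with E := E5(r) < π/2, and suppose there exist points −2Θ ≤ θ₀ < θ₁ < ⋯ < θ_{2n+1} ≤ 2Θ and σ ∈ {−1, 1} such that Arg(r(e^{iθ_j})/e^{iθ_j/2}) = σ(−1)^j E for j = 0, 1, …, 2n+1. Then any function r̃ feasible for Problem Z5(n,Θ) with E5(r̃) ≤ E agrees with r at every point of the unit circle; in particular r is the unique minimizer of E5. -/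
/-- `Feasible n r` : `r` is a rational function of type `(n,n)` whose denominator has no
zeros on the unit circle, and `|r z| = 1` for all `z` on the unit circle. -/
def Feasible (n : ℕ) (r : ℂ → ℂ) : Prop :=
  (∃ p q : Polynomial ℂ, p.natDegree ≤ n ∧ q.natDegree ≤ n ∧
      (∀ z : ℂ, ‖z‖ = 1 → q.eval z ≠ 0) ∧
      ∀ z : ℂ, r z = p.eval z / q.eval z) ∧
  ∀ z : ℂ, ‖z‖ = 1 → ‖r z‖ = 1

/-- The Z5 error: `sup_{z ∈ S_Θ} |Arg (r z / √z)|`, where `S_Θ = {e^{iθ} : θ ∈ [-2Θ,2Θ]}`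
and `√z` is the principal square root. -/
noncomputable def E5 (Θ : ℝ) (r : ℂ → ℂ) : ℝ :=
  sSup ((fun θ : ℝ =>
      |(r (Complex.exp (θ * Complex.I)) / Complex.exp (θ * Complex.I) ^ ((1 : ℂ)/2)).arg|) ''
    Set.Icc (-(2*Θ)) (2*Θ))

/-- `sign z` for `z` on the unit circle away from the imaginary axis. -/
noncomputable def csign (z : ℂ) : ℂ := if 0 < z.re then 1 else -1

/-- The Z6 error: `sup_{z ∈ T_Θ} |Arg (s z / sign z)|`, where
`T_Θ = {e^{iθ} : θ ∈ [-Θ,Θ] ∪ [π-Θ,π+Θ]}`. -/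
noncomputable def E6 (Θ : ℝ) (s : ℂ → ℂ) : ℝ :=
  sSup ((fun θ : ℝ =>
      |(s (Complex.exp (θ * Complex.I)) / csign (Complex.exp (θ * Complex.I))).arg|) ''
    (Set.Icc (-Θ) Θ ∪ Set.Icc (Real.pi - Θ) (Real.pi + Θ)))


open Complex Set Polynomial

lemma exp_sub_exp (a b : ℝ) :
    Complex.exp (a*I) - Complex.exp (b*I)
      = 2*I*Complex.exp ((((a+b)/2 : ℝ) : ℂ)*I) * ((Real.sin ((a-b)/2) : ℝ) : ℂ) := by
  have h1 : ((Real.sin a : ℝ) : ℂ) - ((Real.sin b : ℝ) : ℂ)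
      = 2 * ((Real.sin ((a-b)/2) : ℝ) : ℂ) * ((Real.cos ((a+b)/2) : ℝ) : ℂ) := by
    exact_mod_cast congrArg (Complex.ofReal) (Real.sin_sub_sin a b)
  have h2 : ((Real.cos a : ℝ) : ℂ) - ((Real.cos b : ℝ) : ℂ)
      = -2 * ((Real.sin ((a+b)/2) : ℝ) : ℂ) * ((Real.sin ((a-b)/2) : ℝ) : ℂ) := by
    exact_mod_cast congrArg (Complex.ofReal) (Real.cos_sub_cos a b)
  rw [Complex.exp_mul_I, Complex.exp_mul_I, Complex.exp_mul_I,
    ← Complex.ofReal_cos, ← Complex.ofReal_sin, ← Complex.ofReal_cos, ← Complex.ofReal_sin,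
    ← Complex.ofReal_cos, ← Complex.ofReal_sin]
  linear_combination h2 + h1 * I - 2 * (((Real.sin ((a+b)/2) : ℝ) : ℂ) * ((Real.sin ((a-b)/2) : ℝ) : ℂ)) * Complex.I_sq

lemma unit_decomp {v : ℂ} (h : ‖v‖ = 1) : v = Complex.exp ((v.arg : ℂ) * I) := by
  conv_lhs => rw [← Complex.norm_mul_exp_arg_mul_I v]
  rw [h, Complex.ofReal_one, one_mul]

lemma half_pow {θ : ℝ} (h1 : -Real.pi < θ) (h2 : θ ≤ Real.pi) :
    Complex.exp ((θ:ℂ)*I) ^ ((1:ℂ)/2) = Complex.exp (((θ/2 : ℝ) : ℂ)*I) := by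
  rw [Complex.cpow_def_of_ne_zero (Complex.exp_ne_zero _),
    Complex.log_exp (by simpa) (by simpa)]
  congr 1
  push_cast; ring

lemma arg_le_E5 {Θ : ℝ} (hΘ1 : 0 < Θ) (hΘ2 : 2*Θ < Real.pi) (r : ℂ → ℂ) {θ : ℝ}
    (hθ : θ ∈ Set.Icc (-(2*Θ)) (2*Θ)) :
    |(r (Complex.exp ((θ:ℂ)*I)) / Complex.exp (((θ/2:ℝ):ℂ)*I)).arg| ≤ E5 Θ r := by
  have hmem : |(r (Complex.exp ((θ:ℂ)*I)) / Complex.exp ((θ:ℂ)*I) ^ ((1:ℂ)/2)).arg| ∈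
      ((fun θ : ℝ =>
      |(r (Complex.exp (θ * Complex.I)) / Complex.exp (θ * Complex.I) ^ ((1 : ℂ)/2)).arg|) ''
        Set.Icc (-(2*Θ)) (2*Θ)) := ⟨θ, hθ, rfl⟩
  have hb : BddAbove ((fun θ : ℝ =>
      |(r (Complex.exp (θ * Complex.I)) / Complex.exp (θ * Complex.I) ^ ((1 : ℂ)/2)).arg|) ''
        Set.Icc (-(2*Θ)) (2*Θ)) := by
    refine ⟨Real.pi, ?_⟩
    rintro x ⟨t, _, rfl⟩
    exact Complex.abs_arg_le_pi _
  have := le_csSup hb hmem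
  rwa [half_pow (by linarith [hθ.1]) (by linarith [hθ.2])] at this

lemma alpha_cont {Θ : ℝ} (hΘ1 : 0 < Θ) (hΘ2 : 2*Θ < Real.pi) {n : ℕ} {r : ℂ → ℂ}
    (hfeas : Feasible n r) (hlt : E5 Θ r < Real.pi/2) :
    ContinuousOn (fun t : ℝ => ((r (Complex.exp ((t:ℂ)*I)) / Complex.exp (((t/2:ℝ):ℂ)*I)).arg : ℝ))
      (Set.Icc (-(2*Θ)) (2*Θ)) := by
  obtain ⟨⟨p, q, hp, hq, hqne, hrpq⟩, habs⟩ := hfeas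
  intro t0 ht0
  apply ContinuousAt.continuousWithinAt
  have hfun : (fun t : ℝ => r (Complex.exp ((t:ℂ)*I)) / Complex.exp (((t/2:ℝ):ℂ)*I))
      = fun t : ℝ => (Polynomial.eval (Complex.exp ((t:ℂ)*I)) p
          / Polynomial.eval (Complex.exp ((t:ℂ)*I)) q) / Complex.exp (((t/2:ℝ):ℂ)*I) := by
    funext t; rw [hrpq]
  have hexp : Continuous fun t : ℝ => Complex.exp ((t:ℂ)*I) :=
    Complex.continuous_exp.comp (Complex.continuous_ofReal.mul continuous_const)
  have hexp2 : Continuous fun t : ℝ => Complex.exp (((t/2:ℝ):ℂ)*I) :=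
    Complex.continuous_exp.comp
      ((Complex.continuous_ofReal.comp (continuous_id.div_const 2)).mul continuous_const)
  have habs1 : ‖r (Complex.exp ((t0:ℂ)*I))‖ = 1 :=
    habs _ (Complex.norm_exp_ofReal_mul_I t0)
  have hcf : ContinuousAt
      (fun t : ℝ => r (Complex.exp ((t:ℂ)*I)) / Complex.exp (((t/2:ℝ):ℂ)*I)) t0 := by
    rw [hfun]
    exact ((((Polynomial.continuous p).comp hexp).continuousAt).div
      (((Polynomial.continuous q).comp hexp).continuousAt)
      (hqne _ (Complex.norm_exp_ofReal_mul_I t0))).div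
      hexp2.continuousAt (Complex.exp_ne_zero _)
  have hvabs : ‖r (Complex.exp ((t0:ℂ)*I)) / Complex.exp (((t0/2:ℝ):ℂ)*I)‖ = 1 := by
    rw [norm_div, habs1, Complex.norm_exp_ofReal_mul_I, div_one]
  have hargb0 : |(r (Complex.exp ((t0:ℂ)*I)) / Complex.exp (((t0/2:ℝ):ℂ)*I)).arg| ≤ E5 Θ r :=
    arg_le_E5 hΘ1 hΘ2 r ht0
  generalize hv : r (Complex.exp ((t0:ℂ)*I)) / Complex.exp (((t0/2:ℝ):ℂ)*I) = v at hvabs hargb0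
  have hvne : v ≠ 0 := by
    intro h; rw [h] at hvabs; simp at hvabs
  have hre : 0 < v.re := by
    have hc : Real.cos v.arg = v.re / ‖v‖ := Complex.cos_arg hvne
    have habs2 := abs_le.mp hargb0
    have hcpos : 0 < Real.cos v.arg := by
      apply Real.cos_pos_of_mem_Ioo
      constructor <;> [linarith [habs2.1]; linarith [habs2.2]]
    rw [hvabs, div_one] at hc; linarith
  have hslit : r (Complex.exp ((t0:ℂ)*I)) / Complex.exp (((t0/2:ℝ):ℂ)*I) ∈ Complex.slitPlane := by
    rw [hv]; exact Complex.mem_slitPlane_iff.mpr (Or.inl hre)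
  exact ContinuousAt.comp (g := Complex.arg) (Complex.continuousAt_arg hslit) hcf


lemma ofReal_mul_re' (a : ℝ) (z : ℂ) : ((a:ℂ)*z).re = a * z.re := by simp

lemma ofReal_mul_im' (a : ℝ) (z : ℂ) : ((a:ℂ)*z).im = a * z.im := by simp

lemma sign_descend {s a : ℝ} (hs : 0 < s) (h : s * a ≤ 0) : a ≤ 0 := by nlinarith

lemma sign_descend' {s a : ℝ} (hs : s < 0) (h : 0 ≤ s * a) : a ≤ 0 := by nlinarith

lemma find_root {D : Polynomial ℂ} {w : ℝ → ℂ} {a b A B : ℝ}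
    (hAa : A ≤ a) (hab : a ≤ b) (hbB : b ≤ B)
    (hw : ContinuousOn w (Set.Icc A B)) (hwne : ∀ x ∈ Set.Icc A B, w x ≠ 0)
    (him : ∀ x ∈ Set.Icc A B, ((Polynomial.eval (Complex.exp ((x:ℂ)*I)) D) / w x).im = 0)
    (ha : 0 ≤ ((Polynomial.eval (Complex.exp ((a:ℂ)*I)) D) / w a).re)
    (hb : ((Polynomial.eval (Complex.exp ((b:ℂ)*I)) D) / w b).re ≤ 0) :
    ∃ ρ ∈ Set.Icc a b, Polynomial.eval (Complex.exp ((ρ:ℂ)*I)) D = 0 := by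
  have hsub : Set.Icc a b ⊆ Set.Icc A B := Set.Icc_subset_Icc hAa hbB
  have hexp : Continuous fun x : ℝ => Complex.exp ((x:ℂ)*I) :=
    Complex.continuous_exp.comp (Complex.continuous_ofReal.mul continuous_const)
  have hcont : ContinuousOn (fun x : ℝ =>
      ((Polynomial.eval (Complex.exp ((x:ℂ)*I)) D) / w x).re) (Set.Icc a b) :=
    Complex.continuous_re.comp_continuousOn
      ((((Polynomial.continuous D).comp hexp).continuousOn).div (hw.mono hsub)
        (fun x hx => hwne x (hsub hx)))
  have h0 : (0:ℝ) ∈ Set.Icc (((Polynomial.eval (Complex.exp ((b:ℂ)*I)) D) / w b).re)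
      (((Polynomial.eval (Complex.exp ((a:ℂ)*I)) D) / w a).re) := ⟨hb, ha⟩
  obtain ⟨ρ, hρ, hSρ⟩ := intermediate_value_Icc' hab hcont h0
  refine ⟨ρ, hρ, ?_⟩
  have him' := him ρ (hsub hρ)
  have hz : (Polynomial.eval (Complex.exp ((ρ:ℂ)*I)) D) / w ρ = 0 := by
    apply Complex.ext <;> simp [hSρ, him']
  rcases div_eq_zero_iff.mp hz with h | h
  · exact h
  · exact absurd h (hwne ρ (hsub hρ))

lemma key (m : ℕ) : ∀ (D : Polynomial ℂ) (w : ℝ → ℂ) (t : Fin (m+2) → ℝ),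
    StrictMono t →
    t (Fin.last (m+1)) - t 0 < 2*Real.pi →
    ContinuousOn w (Set.Icc (t 0) (t (Fin.last (m+1)))) →
    (∀ x ∈ Set.Icc (t 0) (t (Fin.last (m+1))), w x ≠ 0) →
    D.natDegree ≤ m →
    (∀ x ∈ Set.Icc (t 0) (t (Fin.last (m+1))),
      ((Polynomial.eval (Complex.exp ((x:ℂ)*I)) D) / w x).im = 0) →
    (∀ j : Fin (m+2),
      0 ≤ (-1:ℝ)^(j:ℕ) * ((Polynomial.eval (Complex.exp ((t j:ℂ)*I)) D) / w (t j)).re) →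
    D = 0 := by
  induction m with
  | zero =>
    intro D w t hmono hwidth hw hwne hdeg him halt
    have h01 : (0 : Fin 2) < 1 := by decide
    have hL : Fin.last 1 = (1 : Fin 2) := rfl
    have ha := halt 0
    have hb := halt 1
    simp only [Fin.val_zero, Fin.val_one, pow_zero, pow_one, one_mul, neg_one_mul] at ha hb
    rw [hL] at hw hwne him hwidth
    obtain ⟨ρ, hρ, hD⟩ := find_root (le_refl (t 0)) (hmono h01).le (le_refl (t 1))
      hw hwne him ha (by linarith)
    have hC := Polynomial.eq_C_of_natDegree_le_zero hdeg
    rw [hC] at hD ⊢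
    rw [Polynomial.eval_C] at hD
    rw [hD, map_zero]
  | succ m IH =>
    intro D w t hmono hwidth hw hwne hdeg him halt
    set L : Fin (m+3) := Fin.last (m+2) with hLdef
    have h01f : (0 : Fin (m+3)) < 1 := by
      rw [Fin.lt_def]; simp
    have h1Lf : (1 : Fin (m+3)) < L := by
      rw [Fin.lt_def, hLdef]
      simp only [Fin.val_one, Fin.val_last]
      omega
    have h01 : t 0 < t 1 := hmono h01f
    have h1L : t 1 < t L := hmono h1Lf
    have ha := halt 0
    have hb := halt 1
    simp only [Fin.val_zero, Fin.val_one, pow_zero, pow_one, one_mul, neg_one_mul] at ha hb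
    obtain ⟨ρ, hρab, hDρ⟩ := find_root (le_refl (t 0)) h01.le h1L.le hw hwne him ha (by linarith)
    have hρIcc : ρ ∈ Set.Icc (t 0) (t L) := ⟨hρab.1, le_trans hρab.2 h1L.le⟩
    by_cases hD0 : D = 0
    · exact hD0
    obtain ⟨D₁, hfac⟩ := Polynomial.dvd_iff_isRoot.mpr hDρ
    have hD₁0 : D₁ ≠ 0 := fun h => hD0 (by rw [hfac, h, mul_zero])
    have hdeg1 : D₁.natDegree ≤ m := by
      have hmul := Polynomial.natDegree_mul (Polynomial.X_sub_C_ne_zero (Complex.exp ((ρ:ℂ)*I))) hD₁0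
      rw [← hfac, Polynomial.natDegree_X_sub_C] at hmul
      omega
    set w₁ : ℝ → ℂ := fun x => w x / (2*I*Complex.exp ((((x+ρ)/2 : ℝ):ℂ)*I)) with hw₁def
    have hdne : ∀ x : ℝ, (2*I*Complex.exp ((((x+ρ)/2 : ℝ):ℂ)*I)) ≠ 0 := fun x =>
      mul_ne_zero (mul_ne_zero two_ne_zero Complex.I_ne_zero) (Complex.exp_ne_zero _)
    have hw₁ne : ∀ x ∈ Set.Icc (t 0) (t L), w₁ x ≠ 0 := fun x hx =>
      div_ne_zero (hwne x hx) (hdne x)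
    have hw₁c : ContinuousOn w₁ (Set.Icc (t 0) (t L)) := by
      apply hw.div
      · apply Continuous.continuousOn
        apply continuous_const.mul
        exact Complex.continuous_exp.comp
          ((Complex.continuous_ofReal.comp ((continuous_id.add continuous_const).div_const 2)).mul
            continuous_const)
      · exact fun x _ => hdne x
    have hkey : ∀ x : ℝ,
        (Polynomial.eval (Complex.exp ((x:ℂ)*I)) D) / w x
          = ((Real.sin ((x-ρ)/2) : ℝ):ℂ)
            * ((Polynomial.eval (Complex.exp ((x:ℂ)*I)) D₁) / w₁ x) := by
      intro x
      rw [hfac, Polynomial.eval_mul, Polynomial.eval_sub, Polynomial.eval_X, Polynomial.eval_C,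
        exp_sub_exp x ρ]
      simp only [hw₁def]
      rw [div_div_eq_mul_div]
      ring
    have hkeyre : ∀ x : ℝ,
        ((Polynomial.eval (Complex.exp ((x:ℂ)*I)) D) / w x).re
          = Real.sin ((x-ρ)/2)
            * ((Polynomial.eval (Complex.exp ((x:ℂ)*I)) D₁) / w₁ x).re := by
      intro x
      rw [hkey x, ofReal_mul_re']
    have hsin0 : ∀ x ∈ Set.Icc (t 0) (t L), x ≠ ρ → Real.sin ((x-ρ)/2) ≠ 0 := by
      intro x hx hxρ
      rw [Ne, Real.sin_eq_zero_iff_of_lt_of_lt]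
      · intro h; apply hxρ; linarith
      · have := hx.1; have := hρIcc.2; linarith
      · have := hx.2; have := hρIcc.1; linarith
    have hGoff : ∀ x ∈ Set.Icc (t 0) (t L), x ≠ ρ →
        ((Polynomial.eval (Complex.exp ((x:ℂ)*I)) D₁) / w₁ x).im = 0 := by
      intro x hx hxρ
      have h1 := him x hx
      rw [hkey x, ofReal_mul_im'] at h1
      rcases mul_eq_zero.mp h1 with h | h
      · exact absurd h (hsin0 x hx hxρ)
      · exact h
    have hGcont : ContinuousOn (fun x : ℝ =>
        ((Polynomial.eval (Complex.exp ((x:ℂ)*I)) D₁) / w₁ x).im) (Set.Icc (t 0) (t L)) := by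
      apply Complex.continuous_im.comp_continuousOn
      exact (((Polynomial.continuous D₁).comp
        (Complex.continuous_exp.comp (Complex.continuous_ofReal.mul continuous_const))).continuousOn).div
        hw₁c hw₁ne
    have him₁ : ∀ x ∈ Set.Icc (t 0) (t L),
        ((Polynomial.eval (Complex.exp ((x:ℂ)*I)) D₁) / w₁ x).im = 0 := by
      intro x hx
      by_cases hxρ : x = ρ
      · subst hxρ
        have hxL : x < t L := lt_of_le_of_lt hρab.2 h1L
        haveI hne : (nhdsWithin x (Set.Ioc x (t L))).NeBot := by
          rw [nhdsWithin_Ioc_eq_nhdsGT hxL]; infer_instance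
        have hsubIoc : Set.Ioc x (t L) ⊆ Set.Icc (t 0) (t L) := fun y hy =>
          ⟨le_trans hx.1 hy.1.le, hy.2⟩
        have hA : Filter.Tendsto (fun y : ℝ =>
            ((Polynomial.eval (Complex.exp ((y:ℂ)*I)) D₁) / w₁ y).im)
            (nhdsWithin x (Set.Ioc x (t L)))
            (nhds (((Polynomial.eval (Complex.exp ((x:ℂ)*I)) D₁) / w₁ x).im)) :=
          (hGcont x hx).mono hsubIoc
        have hB : Filter.Tendsto (fun y : ℝ =>
            ((Polynomial.eval (Complex.exp ((y:ℂ)*I)) D₁) / w₁ y).im)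
            (nhdsWithin x (Set.Ioc x (t L))) (nhds 0) := by
          refine Filter.Tendsto.congr' ?_ tendsto_const_nhds
          filter_upwards [eventually_mem_nhdsWithin] with y hy
          exact (hGoff y (hsubIoc hy) (ne_of_gt hy.1)).symm
        exact tendsto_nhds_unique hA hB
      · exact hGoff x hx hxρ
    -- general positive-side alternation helper
    have hgen : ∀ i : Fin (m+2), (i:ℕ) ≠ 0 ∨ t 0 = ρ → ρ < t i.succ →
        0 ≤ (-1:ℝ)^(i:ℕ) *
          ((Polynomial.eval (Complex.exp ((t i.succ:ℂ)*I)) D₁) / (-(w₁ (t i.succ)))).re := by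
      intro i _ hρlt
      have hmem : t i.succ ∈ Set.Icc (t 0) (t L) :=
        ⟨hmono.monotone (Fin.zero_le _), hmono.monotone (Fin.le_last _)⟩
      have hsin : 0 < Real.sin ((t i.succ - ρ)/2) := by
        apply Real.sin_pos_of_pos_of_lt_pi
        · linarith
        · have := hmem.2; have := hρIcc.1; linarith
      have halt' := halt i.succ
      rw [Fin.val_succ, pow_succ, hkeyre (t i.succ)] at halt'
      have h3 : Real.sin ((t i.succ - ρ)/2) *
          ((-1:ℝ)^(i:ℕ) * ((Polynomial.eval (Complex.exp ((t i.succ:ℂ)*I)) D₁) / w₁ (t i.succ)).re)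
            ≤ 0 := by nlinarith [halt']
      have h4 := sign_descend hsin h3
      rw [div_neg, Complex.neg_re]
      nlinarith [h4]
    rcases eq_or_lt_of_le hρab.1 with hρ0 | hρ0
    -- Branch B : t 0 = ρ
    · have hD₁z : D₁ = 0 := by
        apply IH D₁ (fun x => -(w₁ x)) (fun i => t i.succ)
        · exact hmono.comp Fin.strictMono_succ
        · rw [Fin.succ_last]
          have : t 0 ≤ t (Fin.succ 0) := (hmono h01f).le
          calc t (Fin.last (m+2)) - t (Fin.succ 0) ≤ t L - t 0 := by
                rw [hLdef]; have : t 0 ≤ t (Fin.succ 0) := (hmono h01f).le; linarith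
            _ < 2*Real.pi := hwidth
        · rw [Fin.succ_last]
          refine (hw₁c.neg).mono (Set.Icc_subset_Icc ?_ ?_)
          · exact hmono.monotone (Fin.zero_le _)
          · rw [hLdef]
        · rw [Fin.succ_last]
          intro x hx
          refine neg_ne_zero.mpr (hw₁ne x ?_)
          exact Set.Icc_subset_Icc (hmono.monotone (Fin.zero_le _)) (by rw [hLdef]) hx
        · exact hdeg1
        · rw [Fin.succ_last]
          intro x hx
          have hx' : x ∈ Set.Icc (t 0) (t L) :=
            Set.Icc_subset_Icc (hmono.monotone (Fin.zero_le _)) (by rw [hLdef]) hx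
          rw [div_neg, Complex.neg_im, him₁ x hx', neg_zero]
        · intro i
          apply hgen i (Or.inr hρ0)
          calc ρ = t 0 := hρ0.symm
            _ < t (Fin.succ i) := hmono (Fin.succ_pos i)
      rw [hfac, hD₁z, mul_zero]
    -- Branch A : t 0 < ρ
    · have hD₁z : D₁ = 0 := by
        apply IH D₁ (fun x => -(w₁ x)) (fun i => if i = 0 then t 0 else t i.succ)
        · intro i j hij
          by_cases hi : i = 0
          · subst hi
            have hj : j ≠ 0 := Fin.pos_iff_ne_zero.mp hij
            simp only [if_pos rfl, if_neg hj]
            exact hmono (lt_of_le_of_lt (Fin.zero_le _) (Fin.succ_pos j))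
          · have hj : j ≠ 0 := by
              intro h; subst h; exact absurd hij (Fin.not_lt_zero i)  
            simp only [if_neg hi, if_neg hj]
            exact hmono (Fin.succ_lt_succ_iff.mpr hij)
        · have hl0 : (Fin.last (m+1)) ≠ (0 : Fin (m+2)) := by
            simp [Fin.ext_iff]
          simp only [if_neg hl0, if_pos rfl, Fin.succ_last]
          rw [hLdef] at hwidth
          exact hwidth
        · have hl0 : (Fin.last (m+1)) ≠ (0 : Fin (m+2)) := by simp [Fin.ext_iff]
          simp only [if_neg hl0, if_pos rfl, Fin.succ_last]
          rw [hLdef] at hw₁c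
          exact hw₁c.neg
        · have hl0 : (Fin.last (m+1)) ≠ (0 : Fin (m+2)) := by simp [Fin.ext_iff]
          simp only [if_neg hl0, if_pos rfl, Fin.succ_last]
          intro x hx
          refine neg_ne_zero.mpr (hw₁ne x ?_)
          rwa [hLdef]
        · exact hdeg1
        · have hl0 : (Fin.last (m+1)) ≠ (0 : Fin (m+2)) := by simp [Fin.ext_iff]
          simp only [if_neg hl0, if_pos rfl, Fin.succ_last]
          intro x hx
          rw [div_neg, Complex.neg_im, him₁ x (by rwa [hLdef]), neg_zero]
        · intro i
          by_cases hi : i = 0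
          · subst hi
            simp only [eq_self_iff_true, if_true, Fin.val_zero, pow_zero, one_mul]
            have hsin : Real.sin ((t 0 - ρ)/2) < 0 := by
              apply Real.sin_neg_of_neg_of_neg_pi_lt
              · linarith
              · have h5 := hρIcc.2
                have h6 := Real.pi_pos
                linarith
            have h3 : Real.sin ((t 0 - ρ)/2) *
                ((Polynomial.eval (Complex.exp ((t 0:ℂ)*I)) D₁) / w₁ (t 0)).re ≥ 0 := by
              have := ha; rw [hkeyre (t 0)] at this; linarith
            have h4 := sign_descend' hsin h3
            rw [div_neg, Complex.neg_re]
            linarith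
          · simp only [if_neg hi]
            apply hgen i (Or.inl (fun h => hi (Fin.ext h)))
            have h1i : (1 : Fin (m+3)) < Fin.succ i := by
              rw [Fin.lt_def, Fin.val_succ]
              simp only [Fin.val_one]
              have := Fin.pos_iff_ne_zero.mpr hi
              omega
            exact lt_of_le_of_lt hρab.2 (hmono h1i)
      rw [hfac, hD₁z, mul_zero]

/-- Equioscillation at `2n+2` points implies uniqueness of the Z5 minimizer. -/
theorem stmt_4 (Θ : ℝ) (hΘ : Θ ∈ Set.Ioo 0 (Real.pi/2)) (n : ℕ) (r : ℂ → ℂ)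
    (hr : Feasible n r) (hE : E5 Θ r < Real.pi/2)
    (θ : Fin (2*n+2) → ℝ) (hmono : StrictMono θ)
    (hlo : -(2*Θ) ≤ θ ⟨0, by omega⟩) (hhi : θ ⟨2*n+1, by omega⟩ ≤ 2*Θ)
    (σ : ℝ) (hσ : σ = 1 ∨ σ = -1)
    (hosc : ∀ j : Fin (2*n+2),
      (r (Complex.exp (θ j * Complex.I)) / Complex.exp ((θ j / 2) * Complex.I)).arg
        = σ * (-1)^(j : ℕ) * E5 Θ r) :
    ∀ r' : ℂ → ℂ, Feasible n r' → E5 Θ r' ≤ E5 Θ r →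
      ∀ z : ℂ, ‖z‖ = 1 → r' z = r z := by
  intro r' hfeas' hle z hz
  have hrc := hr
  have hfeas'c := hfeas'
  obtain ⟨⟨p, q, hpdeg, hqdeg, hqne, hrq⟩, hru⟩ := hrc
  obtain ⟨⟨p', q', hp'deg, hq'deg, hq'ne, hr'q⟩, hr'u⟩ := hfeas'c
  have hΘ0 : 0 < Θ := hΘ.1
  have hπ : 2*Θ < Real.pi := by have := hΘ.2; linarith
  have hπpos := Real.pi_pos
  set α : ℝ → ℝ :=
    fun x => (r (Complex.exp ((x:ℂ)*I)) / Complex.exp (((x/2:ℝ):ℂ)*I)).arg with hαdef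
  set β : ℝ → ℝ :=
    fun x => (r' (Complex.exp ((x:ℂ)*I)) / Complex.exp (((x/2:ℝ):ℂ)*I)).arg with hβdef
  have hosc' : ∀ j : Fin (2*n+2), α (θ j) = σ * (-1)^(j:ℕ) * E5 Θ r := by
    intro j
    rw [hαdef]
    have hcast : (((θ j)/2 : ℝ):ℂ) = ((θ j : ℂ))/2 := by push_cast; ring
    simp only [hcast]
    rw [show ((θ j : ℂ))/2 * I = ((θ j : ℂ)/2) * I from rfl]
    exact hosc j
  -- index facts
  have e0 : (0 : Fin (2*n+2)) = ⟨0, by omega⟩ := by apply Fin.ext; simp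
  have eL : (Fin.last (2*n+1) : Fin (2*n+2)) = ⟨2*n+1, by omega⟩ := by
    apply Fin.ext; simp [Fin.val_last]
  have hθmem : ∀ j : Fin (2*n+2), θ j ∈ Set.Icc (-(2*Θ)) (2*Θ) := by
    intro j
    constructor
    · refine le_trans hlo ?_
      rw [← e0]; exact hmono.monotone (Fin.zero_le _)
    · refine le_trans ?_ hhi
      rw [← eL]; exact hmono.monotone (Fin.le_last _)
  have hIccsub : Set.Icc (θ 0) (θ (Fin.last (2*n+1))) ⊆ Set.Icc (-(2*Θ)) (2*Θ) :=
    Set.Icc_subset_Icc (hθmem 0).1 (hθmem _).2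
  -- decompositions
  have habs1 : ∀ x : ℝ, ‖Complex.exp ((x:ℂ)*I)‖ = 1 :=
    fun x => Complex.norm_exp_ofReal_mul_I x
  have hdec : ∀ x : ℝ, r (Complex.exp ((x:ℂ)*I))
      = Complex.exp (((x/2:ℝ):ℂ)*I) * Complex.exp ((α x :ℂ)*I) := by
    intro x
    have h1 : ‖r (Complex.exp ((x:ℂ)*I)) / Complex.exp (((x/2:ℝ):ℂ)*I)‖ = 1 := by
      rw [norm_div, hru _ (habs1 x), Complex.norm_exp_ofReal_mul_I, div_one]
    have h2 := unit_decomp h1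
    rw [div_eq_iff (Complex.exp_ne_zero _)] at h2
    rw [h2]; ring
  have hdec' : ∀ x : ℝ, r' (Complex.exp ((x:ℂ)*I))
      = Complex.exp (((x/2:ℝ):ℂ)*I) * Complex.exp ((β x :ℂ)*I) := by
    intro x
    have h1 : ‖r' (Complex.exp ((x:ℂ)*I)) / Complex.exp (((x/2:ℝ):ℂ)*I)‖ = 1 := by
      rw [norm_div, hr'u _ (habs1 x), Complex.norm_exp_ofReal_mul_I, div_one]
    have h2 := unit_decomp h1
    rw [div_eq_iff (Complex.exp_ne_zero _)] at h2
    rw [h2]; ring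
  -- the polynomial
  set D : Polynomial ℂ := p * q' - p' * q with hDdef
  have hDdeg : D.natDegree ≤ 2*n := by
    refine le_trans (Polynomial.natDegree_sub_le _ _) (max_le ?_ ?_)
    · exact le_trans (Polynomial.natDegree_mul_le) (by omega)
    · exact le_trans (Polynomial.natDegree_mul_le) (by omega)
  -- the weight
  set w : ℝ → ℂ := fun x => (σ:ℂ) * (2*I*(Polynomial.eval (Complex.exp ((x:ℂ)*I)) q)
      *(Polynomial.eval (Complex.exp ((x:ℂ)*I)) q')*Complex.exp (((x/2:ℝ):ℂ)*I)
      *Complex.exp ((((α x + β x)/2 : ℝ):ℂ)*I)) with hwdef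
  have hσc : (σ:ℂ) ≠ 0 := by rcases hσ with h | h <;> rw [h] <;> norm_num
  have hσ2 : (σ:ℂ) * (σ:ℂ) = 1 := by rcases hσ with h | h <;> rw [h] <;> norm_num
  have hwne : ∀ x : ℝ, w x ≠ 0 := by
    intro x
    rw [hwdef]
    exact mul_ne_zero hσc (mul_ne_zero (mul_ne_zero (mul_ne_zero (mul_ne_zero
      (mul_ne_zero two_ne_zero Complex.I_ne_zero) (hqne _ (habs1 x))) (hq'ne _ (habs1 x)))
      (Complex.exp_ne_zero _)) (Complex.exp_ne_zero _))
  -- the key identity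
  have hdivw : ∀ x : ℝ, (Polynomial.eval (Complex.exp ((x:ℂ)*I)) D) / w x
      = ((σ * Real.sin ((α x - β x)/2) : ℝ) : ℂ) := by
    intro x
    rw [div_eq_iff (hwne x), hDdef]
    have hpz : Polynomial.eval (Complex.exp ((x:ℂ)*I)) p
        = r (Complex.exp ((x:ℂ)*I)) * Polynomial.eval (Complex.exp ((x:ℂ)*I)) q := by
      rw [hrq]; exact (div_mul_cancel₀ _ (hqne _ (habs1 x))).symm
    have hp'z : Polynomial.eval (Complex.exp ((x:ℂ)*I)) p'
        = r' (Complex.exp ((x:ℂ)*I)) * Polynomial.eval (Complex.exp ((x:ℂ)*I)) q' := by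
      rw [hr'q]; exact (div_mul_cancel₀ _ (hq'ne _ (habs1 x))).symm
    rw [Polynomial.eval_sub, Polynomial.eval_mul, Polynomial.eval_mul, hpz, hp'z,
      hdec x, hdec' x, hwdef, Complex.ofReal_mul]
    linear_combination (Polynomial.eval (Complex.exp ((x:ℂ)*I)) q
        * Polynomial.eval (Complex.exp ((x:ℂ)*I)) q' * Complex.exp (((x/2:ℝ):ℂ)*I))
        * (exp_sub_exp (α x) (β x))
      - ((Polynomial.eval (Complex.exp ((x:ℂ)*I)) q * Polynomial.eval (Complex.exp ((x:ℂ)*I)) q'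
        * Complex.exp (((x/2:ℝ):ℂ)*I) * Complex.exp ((((α x + β x)/2 : ℝ):ℂ)*I)
        * (2*I) * ((Real.sin ((α x - β x)/2) : ℝ):ℂ))) * hσ2
  -- continuity of w
  have hαc : ContinuousOn α (Set.Icc (-(2*Θ)) (2*Θ)) := alpha_cont hΘ0 hπ hr hE
  have hβc : ContinuousOn β (Set.Icc (-(2*Θ)) (2*Θ)) :=
    alpha_cont hΘ0 hπ hfeas' (lt_of_le_of_lt hle hE)
  have hexpc : Continuous fun x : ℝ => Complex.exp ((x:ℂ)*I) :=
    Complex.continuous_exp.comp (Complex.continuous_ofReal.mul continuous_const)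
  have hexp2c : Continuous fun x : ℝ => Complex.exp (((x/2:ℝ):ℂ)*I) :=
    Complex.continuous_exp.comp
      ((Complex.continuous_ofReal.comp (continuous_id.div_const 2)).mul continuous_const)
  have hwc : ContinuousOn w (Set.Icc (-(2*Θ)) (2*Θ)) := by
    rw [hwdef]
    refine continuousOn_const.mul (ContinuousOn.mul (ContinuousOn.mul (ContinuousOn.mul ?_ ?_) ?_) ?_)
    · exact (continuous_const.mul (((Polynomial.continuous q).comp hexpc))).continuousOn
    · exact ((Polynomial.continuous q').comp hexpc).continuousOn
    · exact hexp2c.continuousOn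
    · refine Complex.continuous_exp.comp_continuousOn ?_
      exact (Complex.continuous_ofReal.comp_continuousOn ((hαc.add hβc).div_const 2)).mul
        continuousOn_const
  -- bounds on β at the nodes
  have hβbd : ∀ j : Fin (2*n+2), |β (θ j)| ≤ E5 Θ r := by
    intro j
    refine le_trans ?_ hle
    exact arg_le_E5 hΘ0 hπ r' (hθmem j)
  have hEnn : 0 ≤ E5 Θ r := le_trans (abs_nonneg _) (hβbd 0)
  -- apply the key lemma
  have hDzero : D = 0 := by
    apply key (2*n) D w θ hmono
    · rw [eL]
      have h1 := hlo; have h2 := hhi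
      rw [← e0] at h1; rw [← eL] at h2
      linarith
    · exact hwc.mono hIccsub
    · exact fun x _ => hwne x
    · exact hDdeg
    · intro x _
      rw [hdivw x, Complex.ofReal_im]
    · intro j
      rw [hdivw (θ j), Complex.ofReal_re]
      have hbd := abs_le.mp (hβbd j)
      have hα' := hosc' j
      set b := β (θ j)
      set E := E5 Θ r
      have hsin1 : 0 ≤ Real.sin ((E - b)/2) :=
        Real.sin_nonneg_of_nonneg_of_le_pi (by linarith [hbd.2]) (by linarith [hbd.1])
      have hsin2 : 0 ≤ Real.sin ((E + b)/2) :=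
        Real.sin_nonneg_of_nonneg_of_le_pi (by linarith [hbd.1]) (by linarith [hbd.2])
      rw [hα']
      rcases hσ with h1 | h1 <;> subst h1
      · rcases Nat.even_or_odd (j:ℕ) with he | he
        · rw [Even.neg_one_pow he]
          simpa using hsin1
        · rw [Odd.neg_one_pow he,
            show ((1:ℝ)*(-1)*E - b)/2 = -((E+b)/2) from by ring, Real.sin_neg]
          linarith [hsin2]
      · rcases Nat.even_or_odd (j:ℕ) with he | he
        · rw [Even.neg_one_pow he,
            show ((-1:ℝ)*1*E - b)/2 = -((E+b)/2) from by ring, Real.sin_neg]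
          linarith [hsin2]
        · rw [Odd.neg_one_pow he,
            show ((-1:ℝ)*(-1)*E - b)/2 = (E-b)/2 from by ring]
          linarith [hsin1]
  -- conclude
  have heq : p * q' = p' * q := by
    have := sub_eq_zero.mp hDzero
    exact this
  have heqz := congrArg (Polynomial.eval z) heq
  rw [Polynomial.eval_mul, Polynomial.eval_mul] at heqz
  rw [hr'q z, hrq z, div_eq_div_iff (hq'ne z hz) (hqne z hz)]
  linear_combination -heqz
end

section
/- For every real x ≥ 0, arccos( ((1 − √x)/(1 + √x))² ) ≤ 2√2 · x^{1/4}. -/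
lemma aux_sin_lb (a : ℝ) (h0 : 0 ≤ a) (h2 : a ≤ Real.pi / 2) :
    2 * a / (2 + a ^ 2) ≤ Real.sin a := by
  have hpos : (0:ℝ) < 2 + a ^ 2 := by positivity
  rw [div_le_iff₀ hpos]
  rcases le_or_gt a 1 with h1 | h1
  · rcases eq_or_lt_of_le h0 with h | h
    · simp [← h]
    · have h3 := Real.sin_gt_sub_cube h
      nlinarith [mul_lt_mul_of_pos_right h3 hpos,
        mul_nonneg (pow_nonneg h.le 3) (show (0:ℝ) ≤ 2 - a^2 by nlinarith)]
  · have hmem1 : (1:ℝ) ∈ Set.Icc (-(Real.pi/2)) (Real.pi/2) := by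
      constructor <;> nlinarith [Real.pi_gt_three]
    have hmema : a ∈ Set.Icc (-(Real.pi/2)) (Real.pi/2) := by
      constructor <;> nlinarith [Real.pi_gt_three]
    have hs1 : Real.sin 1 ≤ Real.sin a :=
      Real.strictMonoOn_sin.monotoneOn hmem1 hmema h1.le
    have h34 : (3:ℝ)/4 < Real.sin 1 := by
      have := Real.sin_gt_sub_cube one_pos
      norm_num at this
      linarith
    nlinarith [sq_nonneg (3*a - 4)]

/-- For every real `x ≥ 0`, `arccos(((1-√x)/(1+√x))²) ≤ 2√2 · x^{1/4}`. -/
theorem stmt_6 (x : ℝ) (hx : 0 ≤ x) :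
    Real.arccos (((1 - Real.sqrt x) / (1 + Real.sqrt x))^2) ≤
      2 * Real.sqrt 2 * x ^ ((1 : ℝ)/4) := by
  set a := Real.sqrt 2 * x ^ ((1:ℝ)/4) with ha
  have hgoal : 2 * Real.sqrt 2 * x ^ ((1:ℝ)/4) = 2 * a := by rw [ha]; ring
  rw [hgoal]
  have hx4 : (0:ℝ) ≤ x ^ ((1:ℝ)/4) := Real.rpow_nonneg hx _
  have ha0 : 0 ≤ a := mul_nonneg (Real.sqrt_nonneg 2) hx4
  have ha2 : a ^ 2 = 2 * Real.sqrt x := by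
    rw [ha, mul_pow, Real.sq_sqrt (by norm_num : (0:ℝ) ≤ 2),
      ← Real.rpow_natCast (x ^ ((1:ℝ)/4)) 2, ← Real.rpow_mul hx]
    norm_num [Real.sqrt_eq_rpow]
  rcases le_or_gt Real.pi (2*a) with hpi | hpi
  · exact (Real.arccos_le_pi _).trans hpi
  · have hs : 0 ≤ Real.sqrt x := Real.sqrt_nonneg x
    have h1s : (0:ℝ) < 1 + Real.sqrt x := by linarith
    have hapi : a ≤ Real.pi / 2 := by linarith
    have hsin := aux_sin_lb a ha0 hapi
    rw [div_le_iff₀ (by positivity : (0:ℝ) < 2 + a ^ 2)] at hsin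
    have hsin0 : 0 ≤ Real.sin a :=
      Real.sin_nonneg_of_nonneg_of_le_pi ha0 (by linarith [Real.pi_pos])
    have hcos : Real.cos (2*a) ≤ ((1 - Real.sqrt x) / (1 + Real.sqrt x))^2 := by
      have hc2 : Real.cos (2*a) = 1 - 2 * Real.sin a ^ 2 := by
        have h := Real.sin_sq_add_cos_sq a
        rw [Real.cos_two_mul]; nlinarith
      rw [hc2, div_pow, le_div_iff₀ (by positivity)]
      have hs' : Real.sqrt x = a^2/2 := by linarith
      rw [hs']
      nlinarith [sq_nonneg (Real.sin a * (2 + a^2) - 2*a),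
        mul_le_mul_of_nonneg_left hsin ha0, sq_nonneg a]
    have hmono : Real.arccos (((1 - Real.sqrt x) / (1 + Real.sqrt x))^2)
        ≤ Real.arccos (Real.cos (2*a)) := by
      unfold Real.arccos
      have := Real.monotone_arcsin hcos
      linarith
    rwa [Real.arccos_cos (by linarith) (by linarith)] at hmono
end

section
/- Let Θ ∈ (0, π/2) and m ∈ ℕ with m ≥ 1. Then the minimal Z6 error E6min(m,Θ) := min_{s feasible for Z6(m,Θ)} E6(s) satisfies 0 < E6min(m,Θ) < π/2. -/
section Z6proof

open Complex Polynomial Filter Topology Set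

/-! ### Auxiliary lemmas -/

lemma Z6_abs_arg_eq (v : ℂ) (hv : v ≠ 0) : |v.arg| = Real.arccos (v.re / ‖v‖) := by
  rw [← Complex.cos_arg hv]
  rcases le_or_gt 0 v.arg with h | h
  · rw [Real.arccos_cos h (Complex.arg_le_pi v), _root_.abs_of_nonneg h]
  · rw [← Real.cos_neg, Real.arccos_cos (by linarith) (by have := Complex.neg_pi_lt_arg v; linarith),
      _root_.abs_of_neg h]

lemma Z6_exp_I_inj {a b : ℝ} (h : |a - b| < 2 * Real.pi)
    (he : Complex.exp (a * Complex.I) = Complex.exp (b * Complex.I)) : a = b := by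
  rw [Complex.exp_eq_exp_iff_exists_int] at he
  obtain ⟨n, hn⟩ := he
  have him := congrArg Complex.im hn
  simp [Complex.add_im, Complex.mul_im, Complex.mul_re] at him
  have hn0 : n = 0 := by
    rcases lt_trichotomy n 0 with h1 | h1 | h1
    · exfalso
      have h2 : (n : ℝ) ≤ -1 := by exact_mod_cast Int.le_of_lt_add_one (by simpa using h1)
      have hπ := Real.pi_pos
      rw [abs_lt] at h
      nlinarith
    · exact h1
    · exfalso
      have h2 : (1 : ℝ) ≤ (n : ℝ) := by exact_mod_cast h1
      have hπ := Real.pi_pos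
      rw [abs_lt] at h
      nlinarith
  rw [hn0] at him
  simpa using him

lemma Z6_arg_exp_eq {θ : ℝ} (h : θ ∈ Set.Ioc (-Real.pi) Real.pi) :
    (Complex.exp (θ * Complex.I)).arg = θ := by
  rw [Complex.exp_mul_I]
  exact Complex.arg_cos_add_sin_mul_I h

lemma Z6_eval_zero_on_circle (f : Polynomial ℂ)
    (h : ∀ z : ℂ, ‖z‖ = 1 → f.eval z = 0) : f = 0 := by
  apply f.eq_zero_of_infinite_isRoot
  have hinj : Set.InjOn (fun θ : ℝ => Complex.exp (θ * Complex.I)) (Set.Icc 0 1) := by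
    intro x hx y hy hxy
    refine Z6_exp_I_inj ?_ hxy
    have hπ := Real.pi_gt_three
    rw [abs_sub_lt_iff]
    constructor <;> [nlinarith [hx.1, hx.2, hy.1, hy.2]; nlinarith [hx.1, hx.2, hy.1, hy.2]]
  have hinf : ((fun θ : ℝ => Complex.exp (θ * Complex.I)) '' (Set.Icc 0 1)).Infinite :=
    (Set.Icc_infinite zero_lt_one).image hinj
  refine hinf.mono ?_
  rintro z ⟨θ, _, rfl⟩
  exact h _ (Complex.norm_exp_ofReal_mul_I θ)

noncomputable def Z6ev (m : ℕ) (c : Fin (m+1) → ℂ) (z : ℂ) : ℂ := ∑ i : Fin (m+1), c i * z ^ (i : ℕ)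

noncomputable def Z6pol (m : ℕ) (c : Fin (m+1) → ℂ) : Polynomial ℂ :=
  ∑ i : Fin (m+1), Polynomial.C (c i) * Polynomial.X ^ (i : ℕ)

lemma Z6pol_natDegree_le (m : ℕ) (c : Fin (m+1) → ℂ) : (Z6pol m c).natDegree ≤ m :=
  Polynomial.natDegree_sum_le_of_forall_le _ _ fun i _ =>
    (Polynomial.natDegree_C_mul_X_pow_le (c i) (i : ℕ)).trans (Nat.lt_succ_iff.mp i.isLt)

lemma Z6pol_eval (m : ℕ) (c : Fin (m+1) → ℂ) (z : ℂ) : (Z6pol m c).eval z = Z6ev m c z := by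
  simp [Z6pol, Z6ev, Polynomial.eval_finset_sum]

lemma Z6pol_coeff (m : ℕ) (c : Fin (m+1) → ℂ) (j : Fin (m+1)) :
    (Z6pol m c).coeff (j : ℕ) = c j := by
  rw [Z6pol, Polynomial.finset_sum_coeff]
  rw [Finset.sum_eq_single j]
  · simp
  · intro i _ hij
    simp only [Polynomial.coeff_C_mul, Polynomial.coeff_X_pow]
    rw [if_neg (by simpa [Fin.val_eq_val, eq_comm] using hij), mul_zero]
  · simp

lemma Z6eval_eq_ev (m : ℕ) (p : Polynomial ℂ) (hp : p.natDegree ≤ m) (z : ℂ) :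
    p.eval z = Z6ev m (fun i => p.coeff (i : ℕ)) z := by
  rw [Polynomial.eval_eq_sum_range' (Nat.lt_succ_of_le hp), Z6ev, ← Fin.sum_univ_eq_sum_range]

lemma Z6ev_smul (m : ℕ) (r : ℝ) (c : Fin (m+1) → ℂ) (z : ℂ) :
    Z6ev m (r • c) z = (r : ℂ) * Z6ev m c z := by
  simp [Z6ev, Finset.mul_sum, Complex.real_smul, mul_assoc]

lemma Z6ev_continuous (m : ℕ) (z : ℂ) : Continuous (fun c : Fin (m+1) → ℂ => Z6ev m c z) :=
  continuous_finset_sum _ fun i _ => (continuous_apply i).mul continuous_const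

lemma Z6_exp_ne_one {r : ℝ} (h0 : 0 < r) (h1 : r ≤ 1) :
    Complex.exp ((r : ℂ) * Complex.I) ≠ 1 := by
  intro hexp
  rw [Complex.exp_eq_one_iff] at hexp
  obtain ⟨k, hk⟩ := hexp
  have him := congrArg Complex.im hk
  simp [Complex.mul_im] at him
  have hπ := Real.pi_gt_three
  rcases lt_trichotomy k 0 with hlt | heq | hgt
  · have : (k:ℝ) ≤ -1 := by exact_mod_cast Int.le_of_lt_add_one (by simpa using hlt)
    nlinarith
  · rw [heq] at him; simp at him; linarith
  · have : (1:ℝ) ≤ (k:ℝ) := by exact_mod_cast hgt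
    nlinarith

lemma Z6_abs_eval_ext (f g : Polynomial ℂ) (z0 : ℂ) (hz0 : ‖z0‖ = 1)
    (h : ∀ z : ℂ, ‖z‖ = 1 → z ≠ z0 →
      ‖f.eval z‖ = ‖g.eval z‖) :
    ‖f.eval z0‖ = ‖g.eval z0‖ := by
  set r : ℕ → ℝ := fun n => 1/(n+1) with hr
  have hrpos : ∀ n, 0 < r n := fun n => by positivity
  have hrle : ∀ n, r n ≤ 1 := by
    intro n
    rw [hr]
    rw [div_le_one (by positivity)]
    exact le_add_of_nonneg_left (Nat.cast_nonneg n)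
  set u : ℕ → ℂ := fun n => z0 * Complex.exp ((r n : ℂ) * Complex.I) with hu
  have hz0ne : z0 ≠ 0 := by
    intro h0; rw [h0] at hz0; simp at hz0
  have humem : ∀ n, ‖u n‖ = 1 := by
    intro n
    rw [hu]
    simp only [norm_mul, hz0, Complex.norm_exp_ofReal_mul_I, one_mul]
  have hune : ∀ n, u n ≠ z0 := by
    intro n h'
    exact Z6_exp_ne_one (hrpos n) (hrle n)
      (mul_left_cancel₀ hz0ne (h'.trans (mul_one z0).symm))
  have hulim : Filter.Tendsto u Filter.atTop (nhds z0) := by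
    have h1 : Filter.Tendsto r Filter.atTop (nhds 0) := tendsto_one_div_add_atTop_nhds_zero_nat
    have h2 : Filter.Tendsto (fun n : ℕ => (r n : ℂ) * Complex.I) Filter.atTop (nhds 0) := by
      have := ((Complex.continuous_ofReal.tendsto 0).comp h1).mul_const Complex.I
      simpa using this
    have h3 : Filter.Tendsto (fun n : ℕ => Complex.exp ((r n : ℂ) * Complex.I))
        Filter.atTop (nhds 1) := by
      have := (Complex.continuous_exp.tendsto 0).comp h2
      simpa [Function.comp_def] using this
    have h4 := h3.const_mul z0
    rw [mul_one] at h4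
    exact h4
  have hf : Filter.Tendsto (fun n => ‖f.eval (u n)‖) Filter.atTop
      (nhds (‖f.eval z0‖)) :=
    (continuous_norm.tendsto _).comp ((f.continuous.tendsto _).comp hulim)
  have hg : Filter.Tendsto (fun n => ‖g.eval (u n)‖) Filter.atTop
      (nhds (‖g.eval z0‖)) :=
    (continuous_norm.tendsto _).comp ((g.continuous.tendsto _).comp hulim)
  have heq : (fun n => ‖f.eval (u n)‖) = fun n => ‖g.eval (u n)‖ :=
    funext fun n => h (u n) (humem n) (hune n)
  exact tendsto_nhds_unique (heq ▸ hf) hg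

lemma Z6_reduce (m : ℕ) : ∀ (n : ℕ) (p q : Polynomial ℂ), q.natDegree ≤ n → p ≠ 0 → q ≠ 0 →
    p.natDegree ≤ m → q.natDegree ≤ m →
    (∀ z : ℂ, ‖z‖ = 1 → ‖p.eval z‖ = ‖q.eval z‖) →
    ∃ p1 q1 : Polynomial ℂ, p1.natDegree ≤ m ∧ q1.natDegree ≤ m ∧
      (∀ z : ℂ, ‖z‖ = 1 → q1.eval z ≠ 0) ∧
      (∀ z : ℂ, ‖z‖ = 1 → ‖p1.eval z‖ = ‖q1.eval z‖) ∧
      (∀ z : ℂ, ‖z‖ = 1 → q.eval z ≠ 0 →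
        p1.eval z / q1.eval z = p.eval z / q.eval z) := by
  intro n
  induction n with
  | zero =>
    intro p q hqn hp hq hpm hqm habs
    refine ⟨p, q, hpm, hqm, fun z hz => ?_, habs, fun z _ _ => rfl⟩
    have hqc : q = Polynomial.C (q.coeff 0) := Polynomial.eq_C_of_natDegree_le_zero hqn
    rw [hqc, Polynomial.eval_C]
    intro h0
    exact hq (by rw [hqc, h0, map_zero])
  | succ n ih =>
    intro p q hqn hp hq hpm hqm habs
    by_cases hroot : ∀ z : ℂ, ‖z‖ = 1 → q.eval z ≠ 0
    · exact ⟨p, q, hpm, hqm, hroot, habs, fun z _ _ => rfl⟩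
    push_neg at hroot
    obtain ⟨z0, hz0, hq0⟩ := hroot
    have hp0 : p.eval z0 = 0 := by
      have h1 := habs z0 hz0
      rw [hq0, norm_zero] at h1
      exact norm_eq_zero.mp h1
    obtain ⟨p', hp'⟩ := (Polynomial.dvd_iff_isRoot.mpr hp0 :
      (Polynomial.X - Polynomial.C z0) ∣ p)
    obtain ⟨q', hq'⟩ := (Polynomial.dvd_iff_isRoot.mpr hq0 :
      (Polynomial.X - Polynomial.C z0) ∣ q)
    have hX : (Polynomial.X - Polynomial.C z0 : Polynomial ℂ) ≠ 0 := Polynomial.X_sub_C_ne_zero z0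
    have hp'0 : p' ≠ 0 := fun h => hp (by rw [hp', h, mul_zero])
    have hq'0 : q' ≠ 0 := fun h => hq (by rw [hq', h, mul_zero])
    have hdq : q.natDegree = q'.natDegree + 1 := by
      rw [hq', Polynomial.natDegree_mul hX hq'0, Polynomial.natDegree_X_sub_C, add_comm]
    have hdp : p.natDegree = p'.natDegree + 1 := by
      rw [hp', Polynomial.natDegree_mul hX hp'0, Polynomial.natDegree_X_sub_C, add_comm]
    have habs' : ∀ z : ℂ, ‖z‖ = 1 →
        ‖p'.eval z‖ = ‖q'.eval z‖ := by
      have hne : ∀ z : ℂ, ‖z‖ = 1 → z ≠ z0 →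
          ‖p'.eval z‖ = ‖q'.eval z‖ := by
        intro z hz hzne
        have h1 := habs z hz
        rw [hp', hq', Polynomial.eval_mul, Polynomial.eval_mul, norm_mul, norm_mul] at h1
        have hfac : ‖(Polynomial.X - Polynomial.C z0).eval z‖ ≠ 0 := by
          simp only [Polynomial.eval_sub, Polynomial.eval_X, Polynomial.eval_C, ne_eq,
            norm_eq_zero, sub_eq_zero]
          exact hzne
        exact mul_left_cancel₀ hfac h1
      intro z hz
      by_cases hzz : z = z0
      · subst hzz
        exact Z6_abs_eval_ext p' q' z hz fun w hw hwne => hne w hw hwne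
      · exact hne z hz hzz
    obtain ⟨p1, q1, h1, h2, h3, h4, h5⟩ :=
      ih p' q' (by omega) hp'0 hq'0 (by omega) (by omega) habs'
    refine ⟨p1, q1, h1, h2, h3, h4, fun z hz hqz => ?_⟩
    have hzne : z ≠ z0 := by
      intro h0
      apply hqz
      rw [h0, hq0]
    have hq'z : q'.eval z ≠ 0 := by
      intro h0
      apply hqz
      rw [hq', Polynomial.eval_mul, h0, mul_zero]
    rw [h5 z hz hq'z, hp', hq', Polynomial.eval_mul, Polynomial.eval_mul,
      mul_div_mul_left _ _ (by
        simp only [Polynomial.eval_sub, Polynomial.eval_X, Polynomial.eval_C, ne_eq,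
          sub_eq_zero]
        exact hzne)]

lemma Z6_approach {a b θ : ℝ} (hab : a < b) (hlen : b - a < 2*Real.pi)
    (hθ : θ ∈ Set.Icc a b) :
    ∃ u : ℕ → ℝ, (∀ n, u n ∈ Set.Icc a b) ∧
      Function.Injective (fun n => Complex.exp ((u n : ℂ) * Complex.I)) ∧
      Filter.Tendsto u Filter.atTop (nhds θ) := by
  have hπ := Real.pi_pos
  rcases le_or_gt θ ((a+b)/2) with hmid | hmid
  · refine ⟨fun n => θ + ((b-a)/2)/(n+1), ?_, ?_, ?_⟩
    · intro n
      have h1 : (0:ℝ) < ((b-a)/2) := by linarith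
      have h2 : ((b-a)/2)/(n+1 : ℝ) ≤ (b-a)/2 := by
        apply div_le_self h1.le
        exact le_add_of_nonneg_left (Nat.cast_nonneg n)
      have h3 : (0:ℝ) < ((b-a)/2)/(n+1 : ℝ) := by positivity
      constructor <;> [linarith [hθ.1]; linarith]
    · intro n k hnk
      simp only at hnk
      have heq : θ + ((b-a)/2)/(n+1 : ℝ) = θ + ((b-a)/2)/(k+1 : ℝ) := by
        apply Z6_exp_I_inj _ hnk
        have h1 : (0:ℝ) < (b-a)/2 := by linarith
        have h2 : ∀ j : ℕ, 0 < ((b-a)/2)/(j+1 : ℝ) ∧ ((b-a)/2)/(j+1 : ℝ) ≤ (b-a)/2 := by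
          intro j
          constructor
          · positivity
          · apply div_le_self (by linarith)
            exact le_add_of_nonneg_left (Nat.cast_nonneg j)
        have := h2 n; have := h2 k
        rw [abs_sub_lt_iff]
        constructor <;> nlinarith
      have h4 : ((b-a)/2)/(n+1 : ℝ) = ((b-a)/2)/(k+1 : ℝ) := by linarith
      field_simp at h4
      have h5 : ((n:ℝ)+1) = k+1 := mul_left_cancel₀ (sub_pos.mpr hab).ne' h4.symm
      exact_mod_cast (by linarith : (n:ℝ) = k)
    · have h1 : Filter.Tendsto (fun n : ℕ => ((b-a)/2)/(n+1 : ℝ)) Filter.atTop (nhds 0) := by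
        have := tendsto_one_div_add_atTop_nhds_zero_nat.const_mul ((b-a)/2)
        simpa [div_eq_mul_inv, one_div, mul_comm] using this
      have := h1.const_add θ
      simpa using this
  · refine ⟨fun n => θ - ((b-a)/2)/(n+1), ?_, ?_, ?_⟩
    · intro n
      have h1 : (0:ℝ) < ((b-a)/2) := by linarith
      have h2 : ((b-a)/2)/(n+1 : ℝ) ≤ (b-a)/2 := by
        apply div_le_self h1.le
        exact le_add_of_nonneg_left (Nat.cast_nonneg n)
      have h3 : (0:ℝ) < ((b-a)/2)/(n+1 : ℝ) := by positivity
      constructor <;> [linarith; linarith [hθ.2]]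
    · intro n k hnk
      simp only at hnk
      have heq : θ - ((b-a)/2)/(n+1 : ℝ) = θ - ((b-a)/2)/(k+1 : ℝ) := by
        apply Z6_exp_I_inj _ hnk
        have h1 : (0:ℝ) < (b-a)/2 := by linarith
        have h2 : ∀ j : ℕ, 0 < ((b-a)/2)/(j+1 : ℝ) ∧ ((b-a)/2)/(j+1 : ℝ) ≤ (b-a)/2 := by
          intro j
          constructor
          · positivity
          · apply div_le_self (by linarith)
            exact le_add_of_nonneg_left (Nat.cast_nonneg j)
        have := h2 n; have := h2 k
        rw [abs_sub_lt_iff]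
        constructor <;> nlinarith
      have h4 : ((b-a)/2)/(n+1 : ℝ) = ((b-a)/2)/(k+1 : ℝ) := by linarith
      field_simp at h4
      have h5 : ((n:ℝ)+1) = k+1 := mul_left_cancel₀ (sub_pos.mpr hab).ne' h4.symm
      exact_mod_cast (by linarith : (n:ℝ) = k)
    · have h1 : Filter.Tendsto (fun n : ℕ => ((b-a)/2)/(n+1 : ℝ)) Filter.atTop (nhds 0) := by
        have := tendsto_one_div_add_atTop_nhds_zero_nat.const_mul ((b-a)/2)
        simpa [div_eq_mul_inv, one_div, mul_comm] using this
      have := h1.const_sub θ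
      simpa using this

lemma Z6_csign_right {Θ θ : ℝ} (hΘ : Θ < Real.pi/2) (h : θ ∈ Set.Icc (-Θ) Θ) :
    csign (Complex.exp ((θ:ℂ) * Complex.I)) = 1 := by
  rw [csign, if_pos]
  rw [Complex.exp_ofReal_mul_I_re]
  exact Real.cos_pos_of_mem_Ioo ⟨by linarith [h.1], by linarith [h.2]⟩

lemma Z6_csign_left {Θ θ : ℝ} (hΘ : Θ < Real.pi/2)
    (h : θ ∈ Set.Icc (Real.pi - Θ) (Real.pi + Θ)) :
    csign (Complex.exp ((θ:ℂ) * Complex.I)) = -1 := by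
  rw [csign, if_neg]
  rw [Complex.exp_ofReal_mul_I_re]
  have h1 : Real.cos (θ - Real.pi) > 0 :=
    Real.cos_pos_of_mem_Ioo ⟨by linarith [h.1], by linarith [h.2]⟩
  rw [Real.cos_sub_pi] at h1
  linarith

end Z6proof

section Z6main

open Complex Polynomial Filter Topology Set

/-- The minimal Z6 error lies strictly between `0` and `π/2`. -/
theorem stmt_9 (Θ : ℝ) (hΘ : Θ ∈ Set.Ioo 0 (Real.pi/2)) (m : ℕ) (hm : 1 ≤ m) :
    ∃ e : ℝ, IsLeast {x : ℝ | ∃ s : ℂ → ℂ, Feasible m s ∧ x = E6 Θ s} e ∧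
      0 < e ∧ e < Real.pi/2 := by
  obtain ⟨hΘ0, hΘπ⟩ := hΘ
  have hπ := Real.pi_pos
  set A : Set ℝ := Set.Icc (-Θ) Θ ∪ Set.Icc (Real.pi - Θ) (Real.pi + Θ) with hA
  set E : Set ℝ := {x : ℝ | ∃ s : ℂ → ℂ, Feasible m s ∧ x = E6 Θ s} with hE
  have hζ : ∀ θ : ℝ, ‖Complex.exp ((θ:ℝ) * Complex.I)‖ = 1 :=
    Complex.norm_exp_ofReal_mul_I
  have h0A : (0:ℝ) ∈ A := Or.inl ⟨neg_nonpos.mpr hΘ0.le, hΘ0.le⟩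
  have hE6eq : ∀ s : ℂ → ℂ, E6 Θ s = sSup ((fun θ : ℝ =>
      |(s (Complex.exp (θ * Complex.I)) / csign (Complex.exp (θ * Complex.I))).arg|) '' A) :=
    fun s => rfl
  have hbddim : ∀ s : ℂ → ℂ, BddAbove ((fun θ : ℝ =>
      |(s (Complex.exp (θ * Complex.I)) / csign (Complex.exp (θ * Complex.I))).arg|) '' A) := by
    intro s
    refine ⟨Real.pi, ?_⟩
    rintro x ⟨θ, _, rfl⟩
    exact Complex.abs_arg_le_pi _
  have hval_le : ∀ (s : ℂ → ℂ) (θ : ℝ), θ ∈ A →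
      |(s (Complex.exp (θ * Complex.I)) / csign (Complex.exp (θ * Complex.I))).arg| ≤ E6 Θ s := by
    intro s θ hθ
    rw [hE6eq s]
    exact le_csSup (hbddim s) (Set.mem_image_of_mem _ hθ)
  have hE6nonneg : ∀ s : ℂ → ℂ, 0 ≤ E6 Θ s := fun s =>
    le_trans (abs_nonneg _) (hval_le s 0 h0A)
  -- the identity function is feasible with error ≤ Θ
  have hid : Feasible m (fun z => z) := by
    refine ⟨⟨Polynomial.X, 1, ?_, ?_, ?_, ?_⟩, ?_⟩
    · rw [Polynomial.natDegree_X]; exact hm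
    · rw [Polynomial.natDegree_one]; exact Nat.zero_le m
    · intro z _; simp
    · intro z; simp
    · intro z hz; simpa using hz
  have hE6id : E6 Θ (fun z => z) ≤ Θ := by
    rw [hE6eq]
    apply Real.sSup_le _ hΘ0.le
    rintro x ⟨θ, hθ, rfl⟩
    simp only
    rcases hθ with hθ | hθ
    · rw [Z6_csign_right hΘπ hθ, div_one,
        Z6_arg_exp_eq ⟨by linarith [hθ.1], by linarith [hθ.2]⟩]
      exact abs_le.mpr ⟨hθ.1, hθ.2⟩
    · rw [Z6_csign_left hΘπ hθ]
      have hm1 : (-1 : ℂ) = Complex.exp ((Real.pi : ℝ) * Complex.I) := by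
        rw [Complex.exp_pi_mul_I]
      rw [hm1, ← Complex.exp_sub]
      have harg : ((θ:ℂ) * Complex.I - (Real.pi:ℝ) * Complex.I)
          = ((θ - Real.pi : ℝ) : ℂ) * Complex.I := by
        push_cast; ring
      rw [harg, Z6_arg_exp_eq ⟨by linarith [hθ.1], by linarith [hθ.2]⟩]
      exact abs_le.mpr ⟨by linarith [hθ.1], by linarith [hθ.2]⟩
  have hEne : E.Nonempty := ⟨E6 Θ (fun z => z), ⟨_, hid, rfl⟩⟩
  have hEnonneg : ∀ x ∈ E, (0:ℝ) ≤ x := by rintro x ⟨s, hs, rfl⟩; exact hE6nonneg s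
  have hbdd : BddBelow E := ⟨0, hEnonneg⟩
  set e : ℝ := sInf E with he
  have he0 : 0 ≤ e := le_csInf hEne hEnonneg
  have heΘ : e ≤ Θ := le_trans (csInf_le hbdd ⟨_, hid, rfl⟩) hE6id
  -- minimizing sequence
  have hex : ∀ k : ℕ, ∃ s : ℂ → ℂ, Feasible m s ∧ E6 Θ s < e + 1/((k:ℝ)+1) := by
    intro k
    obtain ⟨x, hxE, hxlt⟩ := exists_lt_of_csInf_lt hEne
      (lt_add_of_pos_right e (by positivity : (0:ℝ) < 1/((k:ℝ)+1)))
    obtain ⟨s, hs, rfl⟩ := hxE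
    exact ⟨s, hs, hxlt⟩
  choose s hfeas hlt using hex
  choose P Q hPdeg hQdeg hQne hrep using fun k => (hfeas k).1
  have habs_s : ∀ k (z : ℂ), ‖z‖ = 1 → ‖s k z‖ = 1 := fun k => (hfeas k).2
  -- normalized coefficient vectors
  set w : ℕ → ((Fin (m+1) → ℂ) × (Fin (m+1) → ℂ)) :=
    fun k => (fun i => (P k).coeff (i:ℕ), fun i => (Q k).coeff (i:ℕ)) with hw
  have hPev : ∀ k (z : ℂ), (P k).eval z = Z6ev m (w k).1 z := fun k z =>
    Z6eval_eq_ev m _ (hPdeg k) z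
  have hQev : ∀ k (z : ℂ), (Q k).eval z = Z6ev m (w k).2 z := fun k z =>
    Z6eval_eq_ev m _ (hQdeg k) z
  have hwne : ∀ k, ‖w k‖ ≠ 0 := by
    intro k h0
    rw [norm_eq_zero] at h0
    have h1 : (Q k).eval 1 ≠ 0 := hQne k 1 (by simp)
    apply h1
    rw [hQev k 1, show (w k).2 = 0 from congrArg Prod.snd h0]
    simp [Z6ev]
  set ν : ℕ → ℝ := fun k => ‖w k‖⁻¹ with hν
  have hνpos : ∀ k, 0 < ν k := fun k => inv_pos.mpr ((norm_nonneg _).lt_of_ne' (hwne k))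
  have hνC : ∀ k, ((ν k : ℝ) : ℂ) ≠ 0 := fun k => Complex.ofReal_ne_zero.mpr (hνpos k).ne'
  set v : ℕ → ((Fin (m+1) → ℂ) × (Fin (m+1) → ℂ)) := fun k => ν k • w k with hv
  have hvmem : ∀ k, v k ∈ Metric.sphere (0:((Fin (m+1) → ℂ) × (Fin (m+1) → ℂ))) 1 := by
    intro k
    rw [mem_sphere_zero_iff_norm, hv]
    simp only
    rw [norm_smul, Real.norm_eq_abs, abs_of_pos (hνpos k)]
    exact inv_mul_cancel₀ (hwne k)
  obtain ⟨vlim, hvlim_mem, φ, hφmono, hφtend⟩ :=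
    (isCompact_sphere (0:((Fin (m+1) → ℂ) × (Fin (m+1) → ℂ))) 1).tendsto_subseq hvmem
  have hv1 : ∀ k (z : ℂ), Z6ev m (v k).1 z = ((ν k : ℝ) : ℂ) * (P k).eval z := by
    intro k z
    rw [hv]
    simp only [Prod.smul_fst]
    rw [Z6ev_smul, hPev]
  have hv2 : ∀ k (z : ℂ), Z6ev m (v k).2 z = ((ν k : ℝ) : ℂ) * (Q k).eval z := by
    intro k z
    rw [hv]
    simp only [Prod.smul_snd]
    rw [Z6ev_smul, hQev]
  have hv2ne : ∀ k (z : ℂ), ‖z‖ = 1 → Z6ev m (v k).2 z ≠ 0 := by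
    intro k z hz
    rw [hv2 k z]
    exact mul_ne_zero (hνC k) (hQne k z hz)
  have hsk : ∀ k (z : ℂ), s k z = Z6ev m (v k).1 z / Z6ev m (v k).2 z := by
    intro k z
    rw [hrep k z, hv1 k z, hv2 k z, mul_div_mul_left _ _ (hνC k)]
  have habsk : ∀ k (z : ℂ), ‖z‖ = 1 →
      ‖Z6ev m (v k).1 z‖ = ‖Z6ev m (v k).2 z‖ := by
    intro k z hz
    have h1 := habs_s k z hz
    rw [hsk k z, norm_div] at h1
    have h2 : ‖Z6ev m (v k).2 z‖ ≠ 0 :=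
      norm_ne_zero_iff.mpr (hv2ne k z hz)
    field_simp at h1
    exact h1
  -- the limit polynomials
  set c : Fin (m+1) → ℂ := vlim.1 with hc
  set d : Fin (m+1) → ℂ := vlim.2 with hd
  set p : Polynomial ℂ := Z6pol m c with hp
  set q : Polynomial ℂ := Z6pol m d with hq
  have htend1 : ∀ z : ℂ, Filter.Tendsto (fun j => Z6ev m (v (φ j)).1 z) Filter.atTop
      (nhds (p.eval z)) := by
    intro z
    rw [hp, Z6pol_eval]
    exact (((Z6ev_continuous m z).comp continuous_fst).tendsto vlim).comp hφtend
  have htend2 : ∀ z : ℂ, Filter.Tendsto (fun j => Z6ev m (v (φ j)).2 z) Filter.atTop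
      (nhds (q.eval z)) := by
    intro z
    rw [hq, Z6pol_eval]
    exact (((Z6ev_continuous m z).comp continuous_snd).tendsto vlim).comp hφtend
  have habs_pq : ∀ z : ℂ, ‖z‖ = 1 →
      ‖p.eval z‖ = ‖q.eval z‖ := by
    intro z hz
    have h1 : Filter.Tendsto (fun j => ‖Z6ev m (v (φ j)).1 z‖) Filter.atTop
        (nhds (‖p.eval z‖)) := (continuous_norm.tendsto _).comp (htend1 z)
    have h2 : Filter.Tendsto (fun j => ‖Z6ev m (v (φ j)).2 z‖) Filter.atTop
        (nhds (‖q.eval z‖)) := (continuous_norm.tendsto _).comp (htend2 z)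
    have heq2 : (fun j => ‖Z6ev m (v (φ j)).1 z‖) =
        fun j => ‖Z6ev m (v (φ j)).2 z‖ := funext fun j => habsk (φ j) z hz
    rw [heq2] at h1
    exact tendsto_nhds_unique h1 h2
  have hvlimne : vlim ≠ 0 := by
    intro h0
    rw [h0] at hvlim_mem
    simp at hvlim_mem
  have hq0 : q ≠ 0 := by
    intro h0
    have hps : ∀ z : ℂ, ‖z‖ = 1 → p.eval z = 0 := by
      intro z hz
      have h1 := habs_pq z hz
      rw [h0, Polynomial.eval_zero, norm_zero] at h1
      exact norm_eq_zero.mp h1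
    have hp0 : p = 0 := Z6_eval_zero_on_circle p hps
    apply hvlimne
    have hc0 : c = 0 := funext fun j => by
      rw [← Z6pol_coeff m c j, ← hp, hp0]; simp
    have hd0 : d = 0 := funext fun j => by
      rw [← Z6pol_coeff m d j, ← hq, h0]; simp
    exact Prod.ext_iff.mpr ⟨hc0, hd0⟩
  have hpne : p ≠ 0 := by
    intro h0
    apply hq0
    apply Z6_eval_zero_on_circle
    intro z hz
    have h1 := habs_pq z hz
    rw [h0, Polynomial.eval_zero, norm_zero] at h1
    exact norm_eq_zero.mp h1.symm
  obtain ⟨p1, q1, hp1deg, hq1deg, hq1ne, habs1, hquot⟩ :=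
    Z6_reduce m q.natDegree p q le_rfl hpne hq0 (Z6pol_natDegree_le m c)
      (Z6pol_natDegree_le m d) habs_pq
  set sstar : ℂ → ℂ := fun z => p1.eval z / q1.eval z with hsstar
  have hsabs : ∀ z : ℂ, ‖z‖ = 1 → ‖sstar z‖ = 1 := by
    intro z hz
    rw [hsstar]
    simp only
    rw [norm_div, habs1 z hz, div_self (norm_ne_zero_iff.mpr (hq1ne z hz))]
  have hfstar : Feasible m sstar := ⟨⟨p1, q1, hp1deg, hq1deg, hq1ne, fun z => rfl⟩, hsabs⟩
  -- Step 1 : the bound at points where q does not vanish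
  have hstep1 : ∀ θ : ℝ, θ ∈ A → q.eval (Complex.exp ((θ:ℝ) * Complex.I)) ≠ 0 →
      |(sstar (Complex.exp ((θ:ℝ) * Complex.I)) /
        csign (Complex.exp ((θ:ℝ) * Complex.I))).arg| ≤ e := by
    intro θ hθA hqz
    set z' : ℂ := Complex.exp ((θ:ℝ) * Complex.I) with hz'
    set ε : ℂ := csign z' with hε
    have hεabs : ‖ε‖ = 1 := by
      rw [hε, csign]; split <;> simp
    have hεne : ε ≠ 0 := by
      intro h0; rw [h0] at hεabs; simp at hεabs
    have hbound : ∀ j : ℕ, |(s (φ j) z' / ε).arg| ≤ e + 1/((j:ℝ)+1) := by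
      intro j
      have h1 : |(s (φ j) z' / ε).arg| ≤ E6 Θ (s (φ j)) := hval_le (s (φ j)) θ hθA
      have h2 : E6 Θ (s (φ j)) < e + 1/((φ j : ℝ)+1) := hlt (φ j)
      have h3 : (1:ℝ)/((φ j : ℝ)+1) ≤ 1/((j:ℝ)+1) := by
        apply one_div_le_one_div_of_le (by positivity)
        have h4 : j ≤ φ j := hφmono.le_apply
        have h5 : (j:ℝ) ≤ (φ j : ℝ) := by exact_mod_cast h4
        linarith
      linarith
    have hq'z : q.eval z' ≠ 0 := hqz
    have hwtend : Filter.Tendsto (fun j => s (φ j) z' / ε) Filter.atTop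
        (nhds (sstar z' / ε)) := by
      have hnum := htend1 z'
      have hden := htend2 z'
      have hqt : Filter.Tendsto (fun j => Z6ev m (v (φ j)).1 z' / Z6ev m (v (φ j)).2 z')
          Filter.atTop (nhds (p.eval z' / q.eval z')) := hnum.div hden hq'z
      have hfun : (fun j => Z6ev m (v (φ j)).1 z' / Z6ev m (v (φ j)).2 z') =
          fun j => s (φ j) z' := funext fun j => (hsk (φ j) z').symm
      rw [hfun] at hqt
      have hstarrw : sstar z' = p.eval z' / q.eval z' := by
        rw [hsstar]
        simp only
        exact hquot z' (hζ θ) hq'z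
      rw [← hstarrw] at hqt
      exact hqt.div_const ε
    have habs_w : ∀ j, ‖s (φ j) z' / ε‖ = 1 := by
      intro j
      rw [norm_div, habs_s (φ j) z' (hζ θ), hεabs, div_one]
    have hne_w : ∀ j, s (φ j) z' / ε ≠ 0 := by
      intro j h0
      have := habs_w j
      rw [h0] at this
      simp at this
    have habsstar : ‖sstar z' / ε‖ = 1 := by
      rw [norm_div, hsabs z' (hζ θ), hεabs, div_one]
    have htargetne : sstar z' / ε ≠ 0 := by
      intro h0
      rw [h0] at habsstar
      simp at habsstar
    have hargtend : Filter.Tendsto (fun j => |(s (φ j) z' / ε).arg|) Filter.atTop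
        (nhds (|(sstar z' / ε).arg|)) := by
      have hrw : (fun j => |(s (φ j) z' / ε).arg|) =
          fun j => Real.arccos ((s (φ j) z' / ε).re / ‖s (φ j) z' / ε‖) :=
        funext fun j => Z6_abs_arg_eq _ (hne_w j)
      rw [hrw, Z6_abs_arg_eq _ htargetne]
      have h1 : Filter.Tendsto (fun j => (s (φ j) z' / ε).re) Filter.atTop
          (nhds ((sstar z' / ε).re)) := (Complex.continuous_re.tendsto _).comp hwtend
      have h2 : Filter.Tendsto (fun j => ‖s (φ j) z' / ε‖) Filter.atTop
          (nhds (‖sstar z' / ε‖)) := (continuous_norm.tendsto _).comp hwtend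
      have h3 := h1.div h2 (by rw [habsstar]; norm_num)
      exact (Real.continuous_arccos.tendsto _).comp h3
    have hBtend : Filter.Tendsto (fun j : ℕ => e + 1/((j:ℝ)+1)) Filter.atTop (nhds e) := by
      have h1 := tendsto_one_div_add_atTop_nhds_zero_nat.const_add e
      simpa using h1
    exact le_of_tendsto_of_tendsto' hargtend hBtend hbound
  -- Step 2 : the bound at all points of A
  have hstep2 : ∀ θ : ℝ, θ ∈ A →
      |(sstar (Complex.exp ((θ:ℝ) * Complex.I)) /
        csign (Complex.exp ((θ:ℝ) * Complex.I))).arg| ≤ e := by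
    intro θ hθA
    have key : ∀ (a b : ℝ) (ε : ℂ), a < b → b - a < 2*Real.pi → Set.Icc a b ⊆ A →
        (∀ t : ℝ, t ∈ Set.Icc a b → csign (Complex.exp ((t:ℝ) * Complex.I)) = ε) →
        ‖ε‖ = 1 → θ ∈ Set.Icc a b →
        |(sstar (Complex.exp ((θ:ℝ) * Complex.I)) /
          csign (Complex.exp ((θ:ℝ) * Complex.I))).arg| ≤ e := by
      intro a b ε hab hlen hsub hcs hεabs hθI
      have hεne : ε ≠ 0 := by
        intro h0; rw [h0] at hεabs; simp at hεabs
      obtain ⟨u, humem, huinj, hulim⟩ := Z6_approach hab hlen hθI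
      have hfin : {n : ℕ | q.eval (Complex.exp ((u n : ℝ) * Complex.I)) = 0}.Finite := by
        have hpre : {n : ℕ | q.eval (Complex.exp ((u n : ℝ) * Complex.I)) = 0} =
            (fun n => Complex.exp ((u n : ℝ) * Complex.I)) ⁻¹' {z : ℂ | q.IsRoot z} := rfl
        rw [hpre]
        exact (Polynomial.finite_setOf_isRoot hq0).preimage huinj.injOn
      have hev : ∀ᶠ n in Filter.atTop, q.eval (Complex.exp ((u n : ℝ) * Complex.I)) ≠ 0 := by
        have h1 := hfin.eventually_cofinite_notMem
        rwa [Nat.cofinite_eq_atTop] at h1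
      have hsne : ∀ t : ℝ, sstar (Complex.exp ((t:ℝ) * Complex.I)) / ε ≠ 0 := by
        intro t h0
        have h1 : ‖sstar (Complex.exp ((t:ℝ) * Complex.I)) / ε‖ = 1 := by
          rw [norm_div, hsabs _ (hζ t), hεabs, div_one]
        rw [h0] at h1
        simp at h1
      have hgood : ∀ᶠ n in Filter.atTop,
          Real.arccos ((sstar (Complex.exp ((u n : ℝ) * Complex.I)) / ε).re /
            ‖sstar (Complex.exp ((u n : ℝ) * Complex.I)) / ε‖) ≤ e := by
        filter_upwards [hev] with n hn
        have h1 := hstep1 (u n) (hsub (humem n)) hn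
        rw [hcs (u n) (humem n)] at h1
        rwa [Z6_abs_arg_eq _ (hsne (u n))] at h1
      have hexp_tend : Filter.Tendsto (fun n => Complex.exp ((u n : ℝ) * Complex.I))
          Filter.atTop (nhds (Complex.exp ((θ:ℝ) * Complex.I))) := by
        apply (Complex.continuous_exp.tendsto _).comp
        exact ((Complex.continuous_ofReal.mul continuous_const).tendsto _).comp hulim
      have hsstar_tend : Filter.Tendsto (fun n => sstar (Complex.exp ((u n : ℝ) * Complex.I)))
          Filter.atTop (nhds (sstar (Complex.exp ((θ:ℝ) * Complex.I)))) := by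
        rw [hsstar]
        simp only
        exact Filter.Tendsto.div ((p1.continuous.tendsto _).comp hexp_tend)
          ((q1.continuous.tendsto _).comp hexp_tend) (hq1ne _ (hζ θ))
      have hwt : Filter.Tendsto (fun n => sstar (Complex.exp ((u n : ℝ) * Complex.I)) / ε)
          Filter.atTop (nhds (sstar (Complex.exp ((θ:ℝ) * Complex.I)) / ε)) :=
        hsstar_tend.div_const ε
      have habslim : ‖sstar (Complex.exp ((θ:ℝ) * Complex.I)) / ε‖ = 1 := by
        rw [norm_div, hsabs _ (hζ θ), hεabs, div_one]
      have harccos_tend : Filter.Tendsto (fun n =>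
          Real.arccos ((sstar (Complex.exp ((u n : ℝ) * Complex.I)) / ε).re /
            ‖sstar (Complex.exp ((u n : ℝ) * Complex.I)) / ε‖))
          Filter.atTop (nhds (Real.arccos
            ((sstar (Complex.exp ((θ:ℝ) * Complex.I)) / ε).re /
            ‖sstar (Complex.exp ((θ:ℝ) * Complex.I)) / ε‖))) := by
        have h1 := (Complex.continuous_re.tendsto _).comp hwt
        have h2 := (continuous_norm.tendsto _).comp hwt
        have h3 := h1.div h2 (by rw [habslim]; norm_num)
        exact (Real.continuous_arccos.tendsto _).comp h3
      have hfinal := le_of_tendsto harccos_tend hgood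
      rw [hcs θ hθI, Z6_abs_arg_eq _ (hsne θ)]
      exact hfinal
    rcases hθA with hθ | hθ
    · exact key (-Θ) Θ 1 (by linarith) (by linarith) (fun t ht => Or.inl ht)
        (fun t ht => Z6_csign_right hΘπ ht) (by simp) hθ
    · exact key (Real.pi - Θ) (Real.pi + Θ) (-1) (by linarith) (by linarith)
        (fun t ht => Or.inr ht) (fun t ht => Z6_csign_left hΘπ ht) (by simp) hθ
  have hE6star_le : E6 Θ sstar ≤ e := by
    rw [hE6eq]
    apply Real.sSup_le _ he0
    rintro x ⟨θ, hθ, rfl⟩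
    exact hstep2 θ hθ
  have hstarE : E6 Θ sstar ∈ E := ⟨sstar, hfstar, rfl⟩
  have heqe : E6 Θ sstar = e := le_antisymm hE6star_le (csInf_le hbdd hstarE)
  -- positivity of e
  have hinjR : Set.InjOn (fun θ : ℝ => Complex.exp ((θ:ℝ) * Complex.I)) (Set.Icc (-Θ) Θ) := by
    intro x hx y hy hxy
    refine Z6_exp_I_inj ?_ hxy
    rw [abs_sub_lt_iff]
    constructor <;> (nlinarith [hx.1, hx.2, hy.1, hy.2])
  have hinjL : Set.InjOn (fun θ : ℝ => Complex.exp ((θ:ℝ) * Complex.I))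
      (Set.Icc (Real.pi - Θ) (Real.pi + Θ)) := by
    intro x hx y hy hxy
    refine Z6_exp_I_inj ?_ hxy
    rw [abs_sub_lt_iff]
    constructor <;> (nlinarith [hx.1, hx.2, hy.1, hy.2])
  have hepos : 0 < e := by
    rcases he0.lt_or_eq with h | h
    · exact h
    exfalso
    have hzero : ∀ θ : ℝ, θ ∈ A → (sstar (Complex.exp ((θ:ℝ) * Complex.I)) /
        csign (Complex.exp ((θ:ℝ) * Complex.I))).arg = 0 := by
      intro θ hθ
      have h1 := hstep2 θ hθ
      rw [← h] at h1
      exact abs_eq_zero.mp (le_antisymm h1 (abs_nonneg _))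
    have hval1 : ∀ (θ : ℝ) (εc : ℂ), ‖εc‖ = 1 →
        csign (Complex.exp ((θ:ℝ) * Complex.I)) = εc → θ ∈ A →
        sstar (Complex.exp ((θ:ℝ) * Complex.I)) = εc := by
      intro θ εc hεabs hcs hθA
      have h1 := hzero θ hθA
      rw [hcs] at h1
      have h2 : ‖sstar (Complex.exp ((θ:ℝ) * Complex.I)) / εc‖ = 1 := by
        have hεne : εc ≠ 0 := by intro h0; rw [h0] at hεabs; simp at hεabs
        rw [norm_div, hsabs _ (hζ θ), hεabs, div_one]
      have h3 := Complex.norm_mul_exp_arg_mul_I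
        (sstar (Complex.exp ((θ:ℝ) * Complex.I)) / εc)
      rw [h1, h2] at h3
      simp at h3
      have hεne : εc ≠ 0 := by intro h0; rw [h0] at hεabs; simp at hεabs
      field_simp at h3
      exact h3.symm
    have honeR : ∀ θ : ℝ, θ ∈ Set.Icc (-Θ) Θ →
        (p1 - q1).eval (Complex.exp ((θ:ℝ) * Complex.I)) = 0 := by
      intro θ hθ
      have h1 := hval1 θ 1 (by simp) (Z6_csign_right hΘπ hθ) (Or.inl hθ)
      rw [hsstar] at h1
      simp only at h1
      have h2 : p1.eval (Complex.exp ((θ:ℝ) * Complex.I)) =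
          q1.eval (Complex.exp ((θ:ℝ) * Complex.I)) := by
        have hqne := hq1ne _ (hζ θ)
        field_simp at h1
        exact h1
      rw [Polynomial.eval_sub, h2, sub_self]
    have honeL : ∀ θ : ℝ, θ ∈ Set.Icc (Real.pi - Θ) (Real.pi + Θ) →
        (p1 + q1).eval (Complex.exp ((θ:ℝ) * Complex.I)) = 0 := by
      intro θ hθ
      have h1 := hval1 θ (-1) (by simp) (Z6_csign_left hΘπ hθ) (Or.inr hθ)
      rw [hsstar] at h1
      simp only at h1
      have hqne := hq1ne _ (hζ θ)
      have h2 : p1.eval (Complex.exp ((θ:ℝ) * Complex.I)) =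
          -q1.eval (Complex.exp ((θ:ℝ) * Complex.I)) := by
        field_simp at h1
        linear_combination h1
      rw [Polynomial.eval_add, h2, neg_add_cancel]
    have hPQ : p1 = q1 := by
      have hroots : {z : ℂ | (p1 - q1).IsRoot z}.Infinite := by
        refine ((Set.Icc_infinite (by linarith : -Θ < Θ)).image hinjR).mono ?_
        rintro z ⟨θ, hθ, rfl⟩
        exact honeR θ hθ
      exact sub_eq_zero.mp (Polynomial.eq_zero_of_infinite_isRoot _ hroots)
    have hPQ' : p1 = -q1 := by
      have hroots : {z : ℂ | (p1 + q1).IsRoot z}.Infinite := by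
        refine ((Set.Icc_infinite (by linarith : Real.pi - Θ < Real.pi + Θ)).image hinjL).mono ?_
        rintro z ⟨θ, hθ, rfl⟩
        exact honeL θ hθ
      have h0 := Polynomial.eq_zero_of_infinite_isRoot _ hroots
      exact eq_neg_of_add_eq_zero_left h0
    have hq1zero : q1 = 0 := by
      have h1 : q1 + q1 = 0 := by
        linear_combination hPQ' - hPQ
      exact add_self_eq_zero.mp h1
    exact hq1ne 1 (by simp) (by rw [hq1zero]; simp)
  refine ⟨e, ⟨heqe ▸ hstarE, fun x hx => csInf_le hbdd hx⟩, hepos, lt_of_le_of_lt heΘ hΘπ⟩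

end Z6main
end

section
/- Let n ∈ ℕ and w ∈ ℂ. Then (1 + w)^{2n+1} = (1 − w)^{2n+1} if and only if there exists an integer j with |j| ≤ n such that w = i·tan(jπ/(2n+1)). -/
open Complex Real

private lemma pyth_c (θ : ℝ) : (Real.sin θ : ℂ)^2 + (Real.cos θ : ℂ)^2 = 1 := by
  exact_mod_cast congrArg (Complex.ofReal) (Real.sin_sq_add_cos_sq θ)

private lemma exp_two_theta_add (θ : ℝ) :
    Complex.exp (2*θ*Complex.I) + 1 = Complex.exp (θ*Complex.I) * (2 * (Real.cos θ : ℂ)) := by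
  have hE : Complex.exp ((θ:ℂ)*Complex.I) = (Real.cos θ : ℂ) + (Real.sin θ : ℂ) * Complex.I := by
    rw [Complex.exp_mul_I, Complex.ofReal_cos, Complex.ofReal_sin]
  have h2 : Complex.exp (2*(θ:ℂ)*Complex.I) = Complex.exp ((θ:ℂ)*Complex.I) ^ 2 := by
    rw [sq, ← Complex.exp_add]; congr 1; ring
  rw [h2, hE]
  linear_combination (Real.sin θ : ℂ)^2 * Complex.I_sq - pyth_c θ

private lemma exp_two_theta_sub (θ : ℝ) :
    Complex.exp (2*θ*Complex.I) - 1 = Complex.exp (θ*Complex.I) * (2 * (Real.sin θ : ℂ) * Complex.I) := by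
  have hE : Complex.exp ((θ:ℂ)*Complex.I) = (Real.cos θ : ℂ) + (Real.sin θ : ℂ) * Complex.I := by
    rw [Complex.exp_mul_I, Complex.ofReal_cos, Complex.ofReal_sin]
  have h2 : Complex.exp (2*(θ:ℂ)*Complex.I) = Complex.exp ((θ:ℂ)*Complex.I) ^ 2 := by
    rw [sq, ← Complex.exp_add]; congr 1; ring
  rw [h2, hE]
  linear_combination -(Real.sin θ : ℂ)^2 * Complex.I_sq + pyth_c θ

private lemma denom_ne_zero (θ : ℝ) (hc : Real.cos θ ≠ 0) :
    Complex.exp (2*θ*Complex.I) + 1 ≠ 0 := by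
  rw [exp_two_theta_add]
  exact mul_ne_zero (Complex.exp_ne_zero _)
    (mul_ne_zero two_ne_zero (Complex.ofReal_ne_zero.mpr hc))

private lemma tan_aux (θ : ℝ) (hc : Real.cos θ ≠ 0) :
    (Complex.exp (2*θ*Complex.I) - 1) / (Complex.exp (2*θ*Complex.I) + 1)
      = Complex.I * Real.tan θ := by
  have hc' : (Real.cos θ : ℂ) ≠ 0 := Complex.ofReal_ne_zero.mpr hc
  have hE := Complex.exp_ne_zero ((θ:ℂ)*Complex.I)
  rw [exp_two_theta_add, exp_two_theta_sub, Real.tan_eq_sin_div_cos, Complex.ofReal_div,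
    mul_div_mul_left _ _ hE]
  field_simp

/-- For `n ∈ ℕ` and `w ∈ ℂ`, `(1+w)^{2n+1} = (1-w)^{2n+1}` iff `w = i·tan(jπ/(2n+1))`
for some integer `j` with `|j| ≤ n`. -/
theorem stmt_14 (n : ℕ) (w : ℂ) :
    (1 + w)^(2*n+1) = (1 - w)^(2*n+1) ↔
      ∃ j : ℤ, |j| ≤ (n : ℤ) ∧
        w = Complex.I * Real.tan ((j : ℝ) * Real.pi / (2 * (n : ℝ) + 1)) := by
  set N : ℕ := 2*n+1 with hN
  have hNpos : 0 < N := Nat.succ_pos _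
  have hNR : (0:ℝ) < (N:ℝ) := by exact_mod_cast hNpos
  have hNC : ((N:ℕ) : ℂ) ≠ 0 := Nat.cast_ne_zero.mpr hNpos.ne'
  have hNC2 : ((N:ℕ) : ℂ) = 2*(n:ℂ)+1 := by rw [hN]; push_cast; ring
  have h2n1 : (2*(n:ℂ)+1) ≠ 0 := by rw [← hNC2]; exact hNC
  have hθeq : ∀ j : ℤ, (j:ℝ) * Real.pi / (N:ℝ) = (j:ℝ) * Real.pi / (2*(n:ℝ)+1) := by
    intro j; rw [hN]; push_cast; ring
  -- cos of jπ/N is nonzero when |j| ≤ n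
  have hcos : ∀ j : ℤ, |j| ≤ (n:ℤ) → Real.cos ((j:ℝ) * Real.pi / N) ≠ 0 := by
    intro j hj
    have hpi := Real.pi_pos
    have habs : |(j:ℝ) * Real.pi / N| < Real.pi / 2 := by
      rw [abs_div, abs_mul, abs_of_pos hpi, abs_of_pos hNR]
      rw [div_lt_div_iff₀ hNR (by norm_num)]
      have hjn : |(j:ℝ)| ≤ (n:ℝ) := by exact_mod_cast hj
      have hNn : (N:ℝ) = 2*(n:ℝ)+1 := by rw [hN]; push_cast; ring
      nlinarith [abs_nonneg (j:ℝ)]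
    obtain ⟨h1, h2⟩ := abs_lt.mp habs
    have := Real.cos_pos_of_mem_Ioo (Set.mem_Ioo.mpr ⟨h1, h2⟩)
    linarith
  constructor
  · intro h
    have h1w : (1:ℂ) - w ≠ 0 := by
      intro h0
      have hw1 : w = 1 := by linear_combination -h0
      rw [h0, hw1, zero_pow hNpos.ne'] at h
      norm_num at h
    set z : ℂ := (1+w)/(1-w) with hz
    have hzN : z ^ N = 1 := by
      rw [hz, div_pow, h, div_self (pow_ne_zero _ h1w)]
    have : NeZero N := ⟨hNpos.ne'⟩
    obtain ⟨k, hkN, hzk⟩ := (Complex.isPrimitiveRoot_exp N hNpos.ne').eq_pow_of_pow_eq_one hzN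
    have hN' : (N:ℤ) = 2*(n:ℤ)+1 := by rw [hN]; push_cast; ring
    have hk2 : (k:ℤ) < (N:ℤ) := by exact_mod_cast hkN
    set j : ℤ := if (k:ℤ) ≤ (n:ℤ) then (k:ℤ) else (k:ℤ) - (N:ℤ) with hj
    have hjle : |j| ≤ (n:ℤ) := by
      rw [hj]; split_ifs with hkn
      · rw [abs_of_nonneg (Int.ofNat_nonneg k)]; exact hkn
      · rw [abs_of_nonpos (by omega : (k:ℤ) - (N:ℤ) ≤ 0)]; omega
    have hkj : ∃ m : ℤ, (k:ℤ) = j + m * (N:ℤ) := by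
      rw [hj]; split_ifs
      · exact ⟨0, by ring⟩
      · exact ⟨1, by ring⟩
    obtain ⟨m, hm⟩ := hkj
    have hkC : ((k:ℕ):ℂ) = (j:ℂ) + (m:ℂ) * (2*(n:ℂ)+1) := by rw [← hNC2]; exact_mod_cast hm
    set θ : ℝ := (j:ℝ) * Real.pi / N with hθ
    have hzexp : z = Complex.exp (2*θ*Complex.I) := by
      rw [← hzk, ← Complex.exp_nat_mul, Complex.exp_eq_exp_iff_exists_int]
      refine ⟨m, ?_⟩
      rw [hθ]
      push_cast
      rw [hkC, hNC2]
      field_simp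
    have hz1 : z + 1 ≠ 0 := by
      intro h0
      have hzm : z = -1 := by linear_combination h0
      rw [hzm, Odd.neg_one_pow ⟨n, by omega⟩] at hzN
      norm_num at hzN
    refine ⟨j, hjle, ?_⟩
    have hwz : w = (z - 1)/(z + 1) := by
      rw [eq_div_iff hz1, hz]
      field_simp
      ring
    rw [hwz, hzexp, tan_aux θ (hcos j hjle), hθ, hθeq j]
  · rintro ⟨j, hjle, hw⟩
    set θ : ℝ := (j:ℝ) * Real.pi / N with hθ
    have hw' : w = Complex.I * Real.tan θ := by rw [hw, hθ, hθeq j]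
    have hc := hcos j hjle
    set z : ℂ := Complex.exp (2*θ*Complex.I) with hz
    have hzN : z ^ N = 1 := by
      rw [hz, ← Complex.exp_nat_mul]
      have harg : ((N:ℕ):ℂ) * (2*(θ:ℂ)*Complex.I) = (j:ℤ) * (2 * (Real.pi:ℂ) * Complex.I) := by
        rw [hθ]
        push_cast
        field_simp
      rw [harg, Complex.exp_int_mul_two_pi_mul_I]
    have hd : z + 1 ≠ 0 := denom_ne_zero θ hc
    have hwz : w = (z - 1)/(z + 1) := by rw [hw', ← tan_aux θ hc]
    have e1 : 1 + w = 2*z/(z+1) := by rw [hwz]; field_simp; ring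
    have e2 : 1 - w = 2/(z+1) := by rw [hwz]; field_simp; norm_num
    rw [e1, e2, div_pow, div_pow, mul_pow, hzN, mul_one]
end
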